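/- arXiv:2109.09874 — 5 statements merged into one kernel-verified Lean document; each statement's English description precedes it below -/
import Mathlib

section
/- (Lower bound for visibility-restricted unit-disk graphs, graph-theoretic form.) For integers r ≥ 1 and m ≥ 1, let G_{r,m} be the simple graph whose vertex set is {0,1} × {1,…,r} × {1,…,m}, in which two distinct vertices (a,i,x) and (b,j,y) are adjacent if and only if a ≠ b, or (a = b and i = j). Then every clique-based separator of G_{r,m} with balance 2/3 has weight at least (r/3)·log₂(m+1). -/
open scoped BigOperators ENNReal

noncomputable section

/-- The Euclidean plane. -/
abbrev Plane : Type := EuclideanSpace ℝ (Fin 2)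

/-- The closed unit disk in the plane. -/
def unitDisk : Set Plane := Metric.closedBall 0 1

/-- `s` is homeomorphic to the closed unit disk. -/
def HomeoToDisk (s : Set Plane) : Prop := Nonempty (s ≃ₜ unitDisk)

/-- The intersection graph of an indexed family of planar sets: distinct indices are
adjacent iff the corresponding sets intersect. -/
def interGraph {I : Type*} (F : I → Set Plane) : SimpleGraph I where
  Adj i j := i ≠ j ∧ (F i ∩ F j).Nonempty
  symm := by
    constructor
    intro i j h
    exact ⟨h.1.symm, by rw [Set.inter_comm]; exact h.2⟩
  loopless := by
    constructor
    intro i h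
    exact h.1 rfl

/-- `S` is a clique-based separator with balance `2/3` of the finite simple graph `G`:
a family of pairwise disjoint cliques such that every connected component of the subgraph
induced on the vertices belonging to no clique of `S` has at most `2n/3` vertices. -/
def IsCBSep {V : Type*} [Fintype V] (G : SimpleGraph V) (S : Finset (Finset V)) : Prop :=
  (∀ C ∈ S, G.IsClique (C : Set V)) ∧
  ((S : Set (Finset V)).Pairwise fun C C' => Disjoint C C') ∧
  ∀ c : (G.induce {v : V | ∀ C ∈ S, v ∉ C}).ConnectedComponent,
    3 * c.supp.ncard ≤ 2 * Fintype.card V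

/-- The weight of a clique-based separator: `∑_{C ∈ S} log₂(|C|+1)`. -/
def sepWeight {V : Type*} (S : Finset (Finset V)) : ℝ :=
  ∑ C ∈ S, Real.logb 2 ((C.card : ℝ) + 1)

/-- A family of pseudo-disks: compact sets homeomorphic to the closed unit disk such that
any two distinct members have frontiers meeting in at most two points. -/
def IsPseudoDiskFamily {I : Type*} (F : I → Set Plane) : Prop :=
  (∀ i, IsCompact (F i)) ∧ (∀ i, HomeoToDisk (F i)) ∧
  ∀ i j : I, i ≠ j → ∃ p q : Plane, frontier (F i) ∩ frontier (F j) ⊆ {p, q}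

/-- A simple polygon: a compact set homeomorphic to the closed unit disk whose frontier is
a union of finitely many nondegenerate closed line segments. -/
def IsSimplePolygon (P : Set Plane) : Prop :=
  IsCompact P ∧ HomeoToDisk P ∧
  ∃ E : Finset (Plane × Plane), (∀ e ∈ E, e.1 ≠ e.2) ∧
    frontier P = ⋃ e ∈ E, segment ℝ e.1 e.2

/-- A polygonal region (possibly with holes): a compact set equal to the closure of its
interior whose frontier is a union of finitely many nondegenerate closed line segments. -/
def IsPolygonalRegion (P : Set Plane) : Prop :=
  IsCompact P ∧ P = closure (interior P) ∧
  ∃ E : Finset (Plane × Plane), (∀ e ∈ E, e.1 ≠ e.2) ∧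
    frontier P = ⋃ e ∈ E, segment ℝ e.1 e.2

/-- A reflex vertex of `P`: a frontier point `v` such that for all sufficiently small
`ρ > 0` the set of points of `P` within distance `ρ` of `v` is not convex. -/
def IsReflexVertex (P : Set Plane) (v : Plane) : Prop :=
  v ∈ frontier P ∧ ∃ ρ₀ > (0:ℝ), ∀ ρ : ℝ, 0 < ρ → ρ ≤ ρ₀ →
    ¬ Convex ℝ (P ∩ Metric.closedBall v ρ)

/-- The geodesic distance in `P`: the infimum of the lengths (total variations) of
continuous paths in `P` from `p` to `q` (in `ℝ≥0∞`). -/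
def geoDist (P : Set Plane) (p q : Plane) : ℝ≥0∞ :=
  ⨅ f ∈ {f : ℝ → Plane | ContinuousOn f (Set.Icc 0 1) ∧
      Set.MapsTo f (Set.Icc 0 1) P ∧ f 0 = p ∧ f 1 = q},
    eVariationOn f (Set.Icc 0 1)

/-- The geodesic disk in `P` with center `q` and radius `r`. -/
def geoDisk (P : Set Plane) (q : Plane) (r : ℝ) : Set Plane :=
  {p | p ∈ P ∧ geoDist P p q ≤ ENNReal.ofReal r}

/-- The line through `c` with direction `d`. -/
def lineThrough (c d : Plane) : Set Plane := {x | ∃ t : ℝ, x = c + t • d}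

/-- The visibility-restricted unit-disk graph of a finite point set `Q` inside `P`:
distinct points are adjacent iff they are at distance at most 1 and the segment joining
them lies in `P`. -/
def visGraph (P : Set Plane) (Q : Finset Plane) : SimpleGraph ↥Q where
  Adj p q := p ≠ q ∧ dist (p : Plane) (q : Plane) ≤ 1 ∧ segment ℝ (p : Plane) (q : Plane) ⊆ P
  symm := by
    constructor
    intro p q h
    refine ⟨h.1.symm, by rw [dist_comm]; exact h.2.1, by rw [segment_symm]; exact h.2.2⟩
  loopless := by
    constructor
    intro p h
    exact h.1 rfl

/-- The graph `G_{r,m}` on `{0,1} × {1,…,r} × {1,…,m}`: two distinct vertices `(a,i,x)`,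
`(b,j,y)` are adjacent iff `a ≠ b`, or (`a = b` and `i = j`). -/
def combGraph (r m : ℕ) : SimpleGraph (Fin 2 × Fin r × Fin m) where
  Adj v w := v ≠ w ∧ (v.1 ≠ w.1 ∨ (v.1 = w.1 ∧ v.2.1 = w.2.1))
  symm := by
    constructor
    intro v w h
    refine ⟨h.1.symm, ?_⟩
    rcases h.2 with h' | ⟨h', h''⟩
    · exact Or.inl h'.symm
    · exact Or.inr ⟨h'.symm, h''.symm⟩
  loopless := by
    constructor
    intro v h
    exact h.1 rfl

/-- The `k × k` grid graph: vertices adjacent iff at `L1`-distance exactly 1. -/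
def gridGraph (k : ℕ) : SimpleGraph (Fin k × Fin k) where
  Adj v w := Nat.dist (v.1 : ℕ) (w.1 : ℕ) + Nat.dist (v.2 : ℕ) (w.2 : ℕ) = 1
  symm := by
    constructor
    intro v w h
    rw [Nat.dist_comm (w.1 : ℕ) (v.1 : ℕ), Nat.dist_comm (w.2 : ℕ) (v.2 : ℕ)]
    exact h
  loopless := by
    constructor
    intro v h
    simp [Nat.dist_self] at h

/-- The children of `v` in the tree `G` rooted at `root`: neighbors one level deeper. -/
def treeChildren {V : Type*} (G : SimpleGraph V) (root v : V) : Set V :=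
  {w | G.Adj v w ∧ G.dist root w = G.dist root v + 1}

/-- A leaf of the tree `G` rooted at `root`: a node with no children. -/
def IsTreeLeaf {V : Type*} (G : SimpleGraph V) (root v : V) : Prop :=
  treeChildren G root v = ∅

end

private lemma comb_loglem (K s : ℝ) (hK : 0 < K) (hs0 : 0 ≤ s) (hsK : s ≤ K) :
    s * Real.log (K + 1) ≤ K * Real.log (s + 1) := by
  have h1 : (1 : ℝ) ∈ Set.Ioi (0:ℝ) := Set.mem_Ioi.2 one_pos
  have h2 : K + 1 ∈ Set.Ioi (0:ℝ) := Set.mem_Ioi.2 (by linarith)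
  have ha : (0:ℝ) ≤ 1 - s / K := by
    have : s / K ≤ 1 := (div_le_one hK).2 hsK
    linarith
  have hb : (0:ℝ) ≤ s / K := by positivity
  have hcc := (strictConcaveOn_log_Ioi.concaveOn).2 h1 h2 ha hb (by ring)
  simp only [smul_eq_mul, Real.log_one, mul_zero, zero_add, mul_one] at hcc
  have heq : 1 - s / K + s / K * (K + 1) = s + 1 := by
    field_simp
    ring
  rw [heq] at hcc
  have h3 := mul_le_mul_of_nonneg_left hcc hK.le
  have h4 : K * (s / K * Real.log (K + 1)) = s * Real.log (K + 1) := by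
    field_simp
  linarith

/-- Every clique-based separator with balance 2/3 of the comb graph
`G_{r,m}` has weight at least `(r/3) · log₂(m+1)`. -/
theorem comb_graph_separator_lower_bound
    (r m : ℕ) (hr : 1 ≤ r) (hm : 1 ≤ m)
    (S : Finset (Finset (Fin 2 × Fin r × Fin m)))
    (hS : IsCBSep (combGraph r m) S) :
    (r : ℝ) / 3 * Real.logb 2 ((m : ℝ) + 1) ≤ sepWeight S := by
  classical
  obtain ⟨hclique, hdisj, hcomp⟩ := hS
  -- each clique has at most 2m vertices
  have hsize : ∀ C ∈ S, C.card ≤ 2 * m := by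
    intro C hC
    have hinj : Set.InjOn (fun v : Fin 2 × Fin r × Fin m => (v.1, v.2.2)) ↑C := by
      intro u hu v hv huv
      by_cases h : u = v
      · exact h
      · have hadj := hclique C hC hu hv h
        simp only [Prod.mk.injEq] at huv
        obtain ⟨h1, h3⟩ := huv
        rcases hadj.2 with h' | ⟨_, h''⟩
        · exact absurd h1 h'
        · exact Prod.ext h1 (Prod.ext h'' h3)
    have hle := Finset.card_le_card_of_injOn
      (t := (Finset.univ : Finset (Fin 2 × Fin m)))
      (fun v : Fin 2 × Fin r × Fin m => (v.1, v.2.2))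
      (fun a _ => Finset.mem_univ _) hinj
    simpa using hle
  set B : Finset (Fin 2 × Fin r × Fin m) := S.biUnion id with hBdef
  have hBcard : B.card = ∑ C ∈ S, C.card :=
    Finset.card_biUnion (fun C hC D hD hne => hdisj (Finset.mem_coe.2 hC) (Finset.mem_coe.2 hD) hne)
  have hcardV : Fintype.card (Fin 2 × Fin r × Fin m) = 2 * (r * m) := by
    simp [mul_assoc]
  have hmemB : ∀ v : Fin 2 × Fin r × Fin m, v ∈ B ↔ ∃ C ∈ S, v ∈ C := by
    intro v
    simp [hBdef]
  -- key counting inequality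
  have hkey : 2 * (r * m) ≤ 3 * B.card := by
    have hside : ∀ a : Fin 2,
        (∀ v : Fin 2 × Fin r × Fin m, v.1 = a → ∃ C ∈ S, v ∈ C) → r * m ≤ B.card := by
      intro a hall
      have hmap : ∀ p : Fin r × Fin m, (a, p.1, p.2) ∈ B := by
        intro p
        obtain ⟨C, hC, hvC⟩ := hall (a, p.1, p.2) rfl
        exact (hmemB _).2 ⟨C, hC, hvC⟩
      have hinj2 : Set.InjOn (fun p : Fin r × Fin m => (a, p.1, p.2))
          ↑(Finset.univ : Finset (Fin r × Fin m)) := by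
        intro x _ y _ hxy
        simpa [Prod.ext_iff] using hxy
      have hle := Finset.card_le_card_of_injOn _ (fun p _ => hmap p) hinj2
      simpa using hle
    by_cases h1 : ∃ v : Fin 2 × Fin r × Fin m, v.1 = 1 ∧ ∀ C ∈ S, v ∉ C
    · by_cases h0 : ∃ v : Fin 2 × Fin r × Fin m, v.1 = 0 ∧ ∀ C ∈ S, v ∉ C
      · -- remainder meets both sides: it is all one connected component
        obtain ⟨v0, hv01, hv0T⟩ := h0
        obtain ⟨v1, hv11, hv1T⟩ := h1
        set T : Set (Fin 2 × Fin r × Fin m) := {v | ∀ C ∈ S, v ∉ C} with hT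
        have hv0 : v0 ∈ T := hv0T
        have hv1 : v1 ∈ T := hv1T
        have hadj : ∀ u w : T, (u : Fin 2 × Fin r × Fin m).1 ≠ (w : Fin 2 × Fin r × Fin m).1 →
            ((combGraph r m).induce T).Adj u w := by
          intro u w h
          have hne : (u : Fin 2 × Fin r × Fin m) ≠ (w : Fin 2 × Fin r × Fin m) :=
            fun he => h (congrArg Prod.fst he)
          exact ⟨hne, Or.inl h⟩
        have hfin2 : ∀ a : Fin 2, a = 0 ∨ a = 1 := by decide
        have hreach : ∀ u : T, ((combGraph r m).induce T).Reachable u ⟨v0, hv0⟩ := by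
          intro u
          rcases hfin2 (u : Fin 2 × Fin r × Fin m).1 with h | h
          · exact ((hadj u ⟨v1, hv1⟩ (by rw [h, hv11]; decide)).reachable).trans
              ((hadj ⟨v1, hv1⟩ ⟨v0, hv0⟩ (by rw [hv11, hv01]; decide)).reachable)
          · exact (hadj u ⟨v0, hv0⟩ (by rw [h, hv01]; decide)).reachable
        have hsupp : (((combGraph r m).induce T).connectedComponentMk ⟨v0, hv0⟩).supp
            = Set.univ := by
          ext u
          simp only [SimpleGraph.ConnectedComponent.mem_supp_iff, Set.mem_univ, iff_true]
          exact SimpleGraph.ConnectedComponent.sound (hreach u)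
        have hc := hcomp (((combGraph r m).induce T).connectedComponentMk ⟨v0, hv0⟩)
        rw [hsupp] at hc
        have hTU : T = ↑(Finset.univ.filter (fun v : Fin 2 × Fin r × Fin m => ∀ C ∈ S, v ∉ C)) := by
          ext v
          simp [hT]
        have hTcard : (Set.univ : Set T).ncard
            = (Finset.univ.filter (fun v : Fin 2 × Fin r × Fin m => ∀ C ∈ S, v ∉ C)).card := by
          rw [Set.ncard_univ, Nat.card_coe_set_eq, hTU, Set.ncard_coe_finset]
        rw [hTcard, hcardV] at hc
        -- the filtered set is the complement of B
        have hUB : (Finset.univ.filter (fun v : Fin 2 × Fin r × Fin m => ∀ C ∈ S, v ∉ C)) = Bᶜ := by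
          ext v
          simp [hBdef]
        have hcompl : (Finset.univ.filter
            (fun v : Fin 2 × Fin r × Fin m => ∀ C ∈ S, v ∉ C)).card
            = 2 * (r * m) - B.card := by
          rw [hUB, Finset.card_compl, hcardV]
        have hBle : B.card ≤ 2 * (r * m) := hcardV ▸ B.card_le_univ
        omega
      · push_neg at h0
        have := hside 0 h0
        omega
    · push_neg at h1
      have := hside 1 h1
      omega
  -- now the real-number computation
  have hm' : (1 : ℝ) ≤ (m : ℝ) := by exact_mod_cast hm
  have hK : (0 : ℝ) < 2 * (m : ℝ) := by linarith
  have hL : (0 : ℝ) < Real.log 2 := Real.log_pos (by norm_num)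
  have hlognn : (0 : ℝ) ≤ Real.log (2 * (m : ℝ) + 1) := Real.log_nonneg (by linarith)
  have hper : ∀ C ∈ S, (C.card : ℝ) * Real.log (2 * (m : ℝ) + 1) / (2 * (m : ℝ) * Real.log 2)
      ≤ Real.logb 2 ((C.card : ℝ) + 1) := by
    intro C hC
    have hc2m : (C.card : ℝ) ≤ 2 * (m : ℝ) := by
      have := hsize C hC
      push_cast
      exact_mod_cast this
    have hmain := comb_loglem (2 * (m : ℝ)) (C.card : ℝ) hK (by positivity) hc2m
    rw [Real.logb, div_le_div_iff₀ (by positivity) hL]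
    nlinarith [mul_le_mul_of_nonneg_right hmain hL.le]
  have hsum : ∑ C ∈ S, (C.card : ℝ) * Real.log (2 * (m : ℝ) + 1) / (2 * (m : ℝ) * Real.log 2)
      ≤ sepWeight S := Finset.sum_le_sum hper
  have hsum2 : ∑ C ∈ S, (C.card : ℝ) * Real.log (2 * (m : ℝ) + 1) / (2 * (m : ℝ) * Real.log 2)
      = (B.card : ℝ) * Real.log (2 * (m : ℝ) + 1) / (2 * (m : ℝ) * Real.log 2) := by
    rw [← Finset.sum_div, ← Finset.sum_mul, hBcard]
    push_cast
    ring
  have hkeyR : 2 * ((r : ℝ) * (m : ℝ)) ≤ 3 * (B.card : ℝ) := by exact_mod_cast hkey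
  have hrB : (r : ℝ) / 3 ≤ (B.card : ℝ) / (2 * (m : ℝ)) := by
    rw [div_le_div_iff₀ (by norm_num) hK]
    nlinarith
  have hlogle : Real.log ((m : ℝ) + 1) ≤ Real.log (2 * (m : ℝ) + 1) :=
    Real.log_le_log (by linarith) (by linarith)
  calc (r : ℝ) / 3 * Real.logb 2 ((m : ℝ) + 1)
      = (r : ℝ) / 3 * (Real.log ((m : ℝ) + 1) / Real.log 2) := by rw [Real.logb]
    _ ≤ (r : ℝ) / 3 * (Real.log (2 * (m : ℝ) + 1) / Real.log 2) := by
        apply mul_le_mul_of_nonneg_left _ (by positivity)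
        exact (div_le_div_iff_of_pos_right hL).2 hlogle
    _ ≤ ((B.card : ℝ) / (2 * (m : ℝ))) * (Real.log (2 * (m : ℝ) + 1) / Real.log 2) :=
        mul_le_mul_of_nonneg_right hrB (div_nonneg hlognn hL.le)
    _ = (B.card : ℝ) * Real.log (2 * (m : ℝ) + 1) / (2 * (m : ℝ) * Real.log 2) := by ring
    _ = _ := hsum2.symm
    _ ≤ sepWeight S := hsum
end

section
/- There is a universal constant c > 0 such that for every integer k ≥ 2 the following holds. Let G_k be the k×k grid graph, i.e., the simple graph on {1,…,k} × {1,…,k} in which two vertices are adjacent if and only if they are at L1-distance exactly 1. Then every clique-based separator of G_k with balance 2/3 has weight at least c·k. -/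
open scoped BigOperators ENNReal

lemma grid_parity {k : ℕ} {v w : Fin k × Fin k} (h : (gridGraph k).Adj v w) :
    ((v.1 : ℕ) + (v.2 : ℕ)) % 2 ≠ ((w.1 : ℕ) + (w.2 : ℕ)) % 2 := by
  have h' : Nat.dist (v.1 : ℕ) (w.1 : ℕ) + Nat.dist (v.2 : ℕ) (w.2 : ℕ) = 1 := h
  simp only [Nat.dist] at h'
  omega

lemma grid_clique_card_le {k : ℕ} {C : Finset (Fin k × Fin k)}
    (h : (gridGraph k).IsClique (C : Set (Fin k × Fin k))) : C.card ≤ 2 := by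
  classical
  have hinj : Set.InjOn (fun v : Fin k × Fin k => ((v.1 : ℕ) + (v.2 : ℕ)) % 2)
      (C : Set (Fin k × Fin k)) := by
    intro v hv w hw hvw
    by_contra hne
    exact grid_parity (h hv hw hne) hvw
  calc C.card = (C.image (fun v : Fin k × Fin k => ((v.1 : ℕ) + (v.2 : ℕ)) % 2)).card :=
        (Finset.card_image_of_injOn hinj).symm
    _ ≤ (Finset.range 2).card := by
        apply Finset.card_le_card
        intro x hx
        simp only [Finset.mem_image] at hx
        obtain ⟨v, _, rfl⟩ := hx
        simp only [Finset.mem_range]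
        omega
    _ = 2 := by simp

lemma grid_row_reach {k : ℕ} (s : Set (Fin k × Fin k)) (i : Fin k)
    (hfree : ∀ j : Fin k, (i, j) ∈ s) (j j' : Fin k) :
    ((gridGraph k).induce s).Reachable ⟨(i, j), hfree j⟩ ⟨(i, j'), hfree j'⟩ := by
  have h0 : 0 < k := j.pos
  have key : ∀ n (hn : n < k),
      ((gridGraph k).induce s).Reachable ⟨(i, ⟨0, h0⟩), hfree _⟩ ⟨(i, ⟨n, hn⟩), hfree _⟩ := by
    intro n
    induction n with
    | zero => intro hn; exact SimpleGraph.Reachable.refl _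
    | succ m ih =>
      intro hn
      have hm : m < k := Nat.lt_of_succ_lt hn
      refine (ih hm).trans (SimpleGraph.Adj.reachable ?_)
      show Nat.dist (i : ℕ) (i : ℕ) + Nat.dist m (m + 1) = 1
      simp only [Nat.dist]
      omega
  exact (key j j.2).symm.trans (key j' j'.2)

lemma grid_col_reach {k : ℕ} (s : Set (Fin k × Fin k)) (j : Fin k)
    (hfree : ∀ i : Fin k, (i, j) ∈ s) (i i' : Fin k) :
    ((gridGraph k).induce s).Reachable ⟨(i, j), hfree i⟩ ⟨(i', j), hfree i'⟩ := by
  have h0 : 0 < k := i.pos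
  have key : ∀ n (hn : n < k),
      ((gridGraph k).induce s).Reachable ⟨(⟨0, h0⟩, j), hfree _⟩ ⟨(⟨n, hn⟩, j), hfree _⟩ := by
    intro n
    induction n with
    | zero => intro hn; exact SimpleGraph.Reachable.refl _
    | succ m ih =>
      intro hn
      have hm : m < k := Nat.lt_of_succ_lt hn
      refine (ih hm).trans (SimpleGraph.Adj.reachable ?_)
      show Nat.dist m (m + 1) + Nat.dist (j : ℕ) (j : ℕ) = 1
      simp only [Nat.dist]
      omega
  exact (key i i.2).symm.trans (key i' i'.2)

/-- Every clique-based separator with balance 2/3 of the `k × k` grid graph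
has weight at least `c·k`, for a universal constant `c > 0`. -/
theorem grid_graph_separator_lower_bound :
    ∃ c : ℝ, 0 < c ∧ ∀ k : ℕ, 2 ≤ k →
      ∀ S : Finset (Finset (Fin k × Fin k)),
        IsCBSep (gridGraph k) S → c * (k : ℝ) ≤ sepWeight S := by
  classical
  refine ⟨1/6, by norm_num, ?_⟩
  intro k hk S hS
  obtain ⟨hclique, hdisj, hcomp⟩ := hS
  set X : Finset (Fin k × Fin k) := S.biUnion id with hXdef
  have hmemX : ∀ v : Fin k × Fin k, v ∈ X ↔ ∃ C ∈ S, v ∈ C := by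
    intro v; simp [hXdef, Finset.mem_biUnion]
  set s : Set (Fin k × Fin k) := {v : Fin k × Fin k | ∀ C ∈ S, v ∉ C} with hsdef
  have hmems : ∀ v : Fin k × Fin k, v ∉ X → v ∈ s := by
    intro v hv C hC hvC
    exact hv ((hmemX v).2 ⟨C, hC, hvC⟩)
  -- key combinatorial bound: k ≤ 3 * X.card
  have hkey : k ≤ 3 * X.card := by
    by_cases hcol : ∀ j : Fin k, ∃ i : Fin k, (i, j) ∈ X
    · -- every column is hit
      have hsub : (Finset.univ : Finset (Fin k)) ⊆ X.image Prod.snd := by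
        intro j _
        obtain ⟨i, hi⟩ := hcol j
        exact Finset.mem_image.2 ⟨(i, j), hi, rfl⟩
      have := (Finset.card_le_card hsub).trans Finset.card_image_le
      simp only [Finset.card_univ, Fintype.card_fin] at this
      omega
    · push_neg at hcol
      obtain ⟨b, hb⟩ := hcol
      by_cases hrow : ∀ i : Fin k, ∃ j : Fin k, (i, j) ∈ X
      · have hsub : (Finset.univ : Finset (Fin k)) ⊆ X.image Prod.fst := by
          intro i _
          obtain ⟨j, hj⟩ := hrow i
          exact Finset.mem_image.2 ⟨(i, j), hj, rfl⟩
        have := (Finset.card_le_card hsub).trans Finset.card_image_le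
        simp only [Finset.card_univ, Fintype.card_fin] at this
        omega
      · push_neg at hrow
        obtain ⟨i₀, hi₀⟩ := hrow
        set A : Finset (Fin k) := Finset.univ.filter (fun i => ∀ j : Fin k, (i, j) ∉ X)
          with hAdef
        have hi₀A : i₀ ∈ A := by simp [hAdef, hi₀]
        have hbfree : ∀ i : Fin k, (i, b) ∈ s := fun i => hmems _ (hb i)
        have hrowfree : ∀ i ∈ A, ∀ j : Fin k, (i, j) ∈ s := by
          intro i hi j
          exact hmems _ ((Finset.mem_filter.1 hi).2 j)
        set c := ((gridGraph k).induce s).connectedComponentMk ⟨(i₀, b), hbfree i₀⟩ with hc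
        have hclaim : ∀ i (hi : i ∈ A) (j : Fin k),
            (⟨(i, j), hrowfree i hi j⟩ : ↥s) ∈ c.supp := by
          intro i hi j
          rw [SimpleGraph.ConnectedComponent.mem_supp_iff, hc,
            SimpleGraph.ConnectedComponent.eq]
          have h1 := grid_row_reach s i (fun j' => hrowfree i hi j') j b
          have h2 := grid_col_reach s b hbfree i i₀
          exact h1.trans h2
        have hsub2 : ((A ×ˢ (Finset.univ : Finset (Fin k)) :
            Finset (Fin k × Fin k)) : Set (Fin k × Fin k)) ⊆ Subtype.val '' c.supp := by
          rintro ⟨i, j⟩ hij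
          have hiA : i ∈ A := (Finset.mem_product.1 (by exact_mod_cast hij)).1
          exact ⟨⟨(i, j), hrowfree i hiA j⟩, hclaim i hiA j, rfl⟩
        have h1 : A.card * k ≤ (Subtype.val '' c.supp).ncard := by
          have := Set.ncard_le_ncard hsub2 (Set.toFinite _)
          rwa [Set.ncard_coe_finset, Finset.card_product, Finset.card_univ,
            Fintype.card_fin] at this
        have h2 : (Subtype.val '' c.supp).ncard = c.supp.ncard :=
          Set.ncard_image_of_injective _ Subtype.val_injective
        have h3 := hcomp c
        have hV : Fintype.card (Fin k × Fin k) = k * k := by simp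
        rw [hV] at h3
        have hAk : 3 * (A.card * k) ≤ 2 * (k * k) := by
          calc 3 * (A.card * k) ≤ 3 * c.supp.ncard := by
                have := h1.trans h2.le
                omega
            _ ≤ 2 * (k * k) := h3
        have hA2k : 3 * A.card ≤ 2 * k := by
          have h5 : (3 * A.card) * k ≤ (2 * k) * k := by ring_nf; ring_nf at hAk; omega
          exact Nat.le_of_mul_le_mul_right h5 (by omega)
        -- rows not in A are hit
        have hHsub : Finset.univ.filter (fun i : Fin k => ¬ ∀ j : Fin k, (i, j) ∉ X)
            ⊆ X.image Prod.fst := by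
          intro i hi
          have := (Finset.mem_filter.1 hi).2
          push_neg at this
          obtain ⟨j, hj⟩ := this
          exact Finset.mem_image.2 ⟨(i, j), hj, rfl⟩
        have hHX := (Finset.card_le_card hHsub).trans Finset.card_image_le
        have hAH := Finset.card_filter_add_card_filter_not
          (s := (Finset.univ : Finset (Fin k))) (fun i : Fin k => ∀ j : Fin k, (i, j) ∉ X)
        rw [Finset.card_univ, Fintype.card_fin] at hAH
        rw [← hAdef] at hAH
        omega
  -- cardinality of X as a sum
  have hcard : X.card = ∑ C ∈ S, C.card := by
    rw [hXdef]
    exact Finset.card_biUnion (fun C hC C' hC' hne => hdisj hC hC' hne)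
  -- weight lower bound
  have hterm : ∀ C ∈ S, ((C.card : ℝ)) / 2 ≤ Real.logb 2 ((C.card : ℝ) + 1) := by
    intro C hC
    have h2 := grid_clique_card_le (hclique C hC)
    obtain ⟨n, hn⟩ : ∃ n, C.card = n := ⟨_, rfl⟩
    rw [hn] at h2 ⊢
    interval_cases n
    · simp
    · rw [show ((1 : ℕ) : ℝ) + 1 = 2 by norm_num, Real.logb_self_eq_one (by norm_num)]
      norm_num
    · rw [show ((2 : ℕ) : ℝ) + 1 = 3 by norm_num]
      have : Real.logb 2 2 ≤ Real.logb 2 3 :=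
        Real.logb_le_logb_of_le (by norm_num) (by norm_num) (by norm_num)
      rw [Real.logb_self_eq_one (by norm_num)] at this
      norm_num
      linarith
  have hsum : (X.card : ℝ) / 2 ≤ sepWeight S := by
    have h1 : (X.card : ℝ) = ∑ C ∈ S, ((C.card : ℝ)) := by
      rw [hcard]; push_cast; ring
    rw [sepWeight, h1, Finset.sum_div]
    exact Finset.sum_le_sum hterm
  have hk3 : (k : ℝ) ≤ 3 * (X.card : ℝ) := by exact_mod_cast hkey
  linarith
end

section
/- For every integer m ≥ 1 and all nonnegative real numbers n_1, …, n_m satisfying n_1 + ⋯ + n_m ≤ 2m², one has ∑_{j=1}^{m} ln(n_j/j + 1) ≤ 3m. -/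
open scoped BigOperators ENNReal

lemma sum_log_Icc_ge (m : ℕ) (hm : 1 ≤ m) :
    (m : ℝ) * Real.log m - m ≤ ∑ j ∈ Finset.Icc 1 m, Real.log j := by
  induction m with
  | zero => omega
  | succ n ih =>
    rcases Nat.eq_or_lt_of_le hm with h | h
    · simp [← h]
    · have hn : 1 ≤ n := by omega
      have ihn := ih hn
      rw [Finset.sum_Icc_succ_top (by omega)]
      have hnp : (0:ℝ) < n := by exact_mod_cast hn
      have key : (n:ℝ) * Real.log (n+1) - n * Real.log n ≤ 1 := by
        have h1 : Real.log ((n+1)/n) ≤ (n+1)/n - 1 :=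
          Real.log_le_sub_one_of_pos (by positivity)
        rw [Real.log_div (by positivity) (by positivity)] at h1
        have h2 : ((n:ℝ)+1)/n - 1 = 1/n := by field_simp; ring
        rw [h2] at h1
        calc (n:ℝ) * Real.log (n+1) - n * Real.log n
            = n * (Real.log (n+1) - Real.log n) := by ring
          _ ≤ n * (1/n) := by
              apply mul_le_mul_of_nonneg_left h1 (le_of_lt hnp)
          _ = 1 := by field_simp
      push_cast
      nlinarith [ihn]


/-- If `n₁ + ⋯ + n_m ≤ 2m²` with all `n_j ≥ 0`, then
`∑_{j=1}^m ln(n_j/j + 1) ≤ 3m`. -/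
theorem sum_log_chord_weight_bound
    (m : ℕ) (hm : 1 ≤ m) (a : ℕ → ℝ)
    (ha : ∀ j ∈ Finset.Icc 1 m, 0 ≤ a j)
    (hsum : ∑ j ∈ Finset.Icc 1 m, a j ≤ 2 * (m : ℝ) ^ 2) :
    ∑ j ∈ Finset.Icc 1 m, Real.log (a j / (j : ℝ) + 1) ≤ 3 * (m : ℝ) := by
  have hm0 : (0:ℝ) < m := by exact_mod_cast hm
  set c : ℝ := 3 * m with hc
  have hc0 : 0 < c := by positivity
  have hterm : ∀ j ∈ Finset.Icc 1 m,
      Real.log (a j / (j : ℝ) + 1) ≤ Real.log c - Real.log j + (a j + j)/c - 1 := by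
    intro j hj
    have hj1 : 1 ≤ j := (Finset.mem_Icc.mp hj).1
    have hjp : (0:ℝ) < j := by exact_mod_cast hj1
    have haj : 0 ≤ a j := ha j hj
    have hx : (0:ℝ) < a j + j := by linarith
    have e1 : a j / (j:ℝ) + 1 = (a j + j) / j := by field_simp
    rw [e1, Real.log_div (ne_of_gt hx) (ne_of_gt hjp)]
    have h2 : Real.log ((a j + j)/c) ≤ (a j + j)/c - 1 :=
      Real.log_le_sub_one_of_pos (by positivity)
    rw [Real.log_div (ne_of_gt hx) (ne_of_gt hc0)] at h2
    linarith
  have hsum2 := Finset.sum_le_sum hterm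
  have hcard : (Finset.Icc 1 m).card = m := by
    rw [Nat.card_Icc]; omega
  have hrw : ∑ j ∈ Finset.Icc 1 m, (Real.log c - Real.log j + (a j + j)/c - 1)
      = m * Real.log c - ∑ j ∈ Finset.Icc 1 m, Real.log j
        + (∑ j ∈ Finset.Icc 1 m, a j + ∑ j ∈ Finset.Icc 1 m, (j:ℝ))/c - m := by
    rw [Finset.sum_sub_distrib, Finset.sum_add_distrib, Finset.sum_sub_distrib,
      Finset.sum_const, Finset.sum_const, ← Finset.sum_div, Finset.sum_add_distrib, hcard]
    push_cast
    ring
  have hj_sum : ∑ j ∈ Finset.Icc 1 m, (j:ℝ) ≤ (m:ℝ)^2 := by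
    calc ∑ j ∈ Finset.Icc 1 m, (j:ℝ) ≤ ∑ j ∈ Finset.Icc 1 m, (m:ℝ) := by
          apply Finset.sum_le_sum
          intro j hj
          exact_mod_cast (Finset.mem_Icc.mp hj).2
      _ = (m:ℝ)^2 := by rw [Finset.sum_const, hcard]; ring
  have hlogfac := sum_log_Icc_ge m hm
  have hlogc : Real.log c = Real.log 3 + Real.log m := by
    rw [hc, Real.log_mul (by norm_num) (ne_of_gt hm0)]
  have hlog3 : Real.log 3 ≤ 2 := by
    have := Real.log_le_sub_one_of_pos (show (0:ℝ) < 3 by norm_num)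
    linarith
  have hdiv : (∑ j ∈ Finset.Icc 1 m, a j + ∑ j ∈ Finset.Icc 1 m, (j:ℝ))/c ≤ m := by
    rw [div_le_iff₀ hc0]
    nlinarith
  rw [hrw] at hsum2
  nlinarith [hsum2, hlogfac]
end

section
/- Let P be a polygonal region (possibly with holes) and let p, q, z₁, z₂ ∈ P be four points all contained in some closed axis-parallel square of side length 1, such that the closed segments pz₁, qz₂ and z₁z₂ are contained in P, |p − z₁| ≤ 1/2, |q − z₂| ≤ 1/2, but the closed segment pq is not contained in P. Then there exist reflex vertices v and v' of P (possibly equal), both lying in the convex hull of {p, q, z₁, z₂}, such that the closed segment pv is contained in P and the closed segment qv' is contained in P; in particular |p − v| ≤ √2 and |q − v'| ≤ √2. -/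
open scoped BigOperators ENNReal

section AuxProof

lemma combo3 {C : Set Plane} (hC : Convex ℝ C) {x y z : Plane} (hx : x ∈ C) (hy : y ∈ C)
    (hz : z ∈ C) {c1 c2 c3 : ℝ} (h1 : 0 ≤ c1) (h2 : 0 ≤ c2) (h3 : 0 ≤ c3)
    (hs : c1 + c2 + c3 = 1) : c1 • x + c2 • y + c3 • z ∈ C := by
  by_cases hd : c2 + c3 = 0
  · have hc2 : c2 = 0 := by linarith
    have hc3 : c3 = 0 := by linarith
    have hc1 : c1 = 1 := by linarith
    simpa [hc1, hc2, hc3] using hx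
  · have hdpos : 0 < c2 + c3 := lt_of_le_of_ne (by linarith) (Ne.symm hd)
    have hyz : (c2/(c2+c3)) • y + (c3/(c2+c3)) • z ∈ C :=
      hC hy hz (by positivity) (by positivity) (by field_simp)
    have hfin := hC hx hyz h1 (by positivity : (0:ℝ) ≤ c2+c3) (by linarith)
    have : c1 • x + (c2+c3) • ((c2/(c2+c3)) • y + (c3/(c2+c3)) • z)
        = c1 • x + c2 • y + c3 • z := by
      match_scalars <;> field_simp
    rwa [this] at hfin

lemma aux_uniform (Q K : Set Plane) (hK : IsCompact K)
    (h : ∀ x ∈ K, ∃ ρ > 0, Convex ℝ (Q ∩ Metric.closedBall x ρ)) :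
    ∃ ε > 0, ∀ x ∈ K, Convex ℝ (Q ∩ Metric.closedBall x ε) := by
  rcases K.eq_empty_or_nonempty with hKe | hKne
  · exact ⟨1, one_pos, by simp [hKe]⟩
  · choose! ρ hρpos hρconv using h
    have hcover : K ⊆ ⋃ y ∈ K, Metric.ball y (ρ y / 2) := fun y hy =>
      Set.mem_biUnion hy (Metric.mem_ball_self (by linarith [hρpos y hy]))
    obtain ⟨t, htK, htfin, hcov⟩ :=
      hK.elim_finite_subcover_image (fun y _ => Metric.isOpen_ball) hcover
    have htne : t.Nonempty := by
      obtain ⟨x, hx⟩ := hKne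
      obtain ⟨y, hy, _⟩ := Set.mem_iUnion₂.1 (hcov hx)
      exact ⟨y, hy⟩
    have hFne : htfin.toFinset.Nonempty := by simpa using htne
    set ε := htfin.toFinset.inf' hFne (fun y => ρ y / 2) with hεdef
    have hεpos : 0 < ε := by
      rw [hεdef, Finset.lt_inf'_iff]
      intro y hy
      have hyK : y ∈ K := htK (htfin.mem_toFinset.1 hy)
      linarith [hρpos y hyK]
    refine ⟨ε, hεpos, ?_⟩
    intro x hx
    obtain ⟨y, hyt, hxy⟩ := Set.mem_iUnion₂.1 (hcov hx)
    have hyK : y ∈ K := htK hyt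
    have hεle : ε ≤ ρ y / 2 := Finset.inf'_le _ (htfin.mem_toFinset.2 hyt)
    have hsub : Metric.closedBall x ε ⊆ Metric.closedBall y (ρ y) := by
      intro z hz
      have hzx : dist z x ≤ ε := Metric.mem_closedBall.1 hz
      have hxy' : dist x y < ρ y / 2 := Metric.mem_ball.1 hxy
      have := dist_triangle z x y
      rw [Metric.mem_closedBall]
      linarith
    have heq : Q ∩ Metric.closedBall x ε = (Q ∩ Metric.closedBall y (ρ y)) ∩ Metric.closedBall x ε := by
      ext z
      constructor
      · rintro ⟨hzQ, hzB⟩; exact ⟨⟨hzQ, hsub hzB⟩, hzB⟩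
      · rintro ⟨⟨hzQ, _⟩, hzB⟩; exact ⟨hzQ, hzB⟩
    rw [heq]
    exact (hρconv y hyK).inter (convex_closedBall x ε)
lemma combo_id (m U V : Plane) (γ β η kk nn c1 c2 c3 : ℝ)
    (hη : c1 * η = β) (hsum : c1 + c2 + c3 = 1)
    (hU : (c1*kk + c2*kk + c3*(kk+2)) = γ*nn) (hnn : nn ≠ 0) :
    m + γ•U + β•V = c1•(m + (kk/nn)•U + η•V) + c2•(m + (kk/nn)•U) + c3•(m + ((kk+2)/nn)•U) := by
  match_scalars
  · linarith
  · field_simp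
    linarith [hU]
  · linarith

set_option maxHeartbeats 1000000 in
lemma sweep (Q : Set Plane) (hQ : IsClosed Q) (a b c : Plane)
    (hab : segment ℝ a b ⊆ Q) (hbc : segment ℝ b c ⊆ Q)
    (hconv : ∀ x, x ∈ convexHull ℝ ({a, b, c} : Set Plane) → segment ℝ a x ⊆ Q →
      ∃ ρ > 0, Convex ℝ (Q ∩ Metric.closedBall x ρ)) :
    segment ℝ a c ⊆ Q := by
  by_cases hcb : c = b
  · rw [hcb]; exact hab
  set V : Plane := c - b with hVdef
  have hVne : V ≠ 0 := sub_ne_zero.mpr hcb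
  have hV : 0 < ‖V‖ := norm_pos_iff.mpr hVne
  set w : ℝ → Plane := fun t => b + t • V with hwdef
  set S : Set ℝ := {t | t ∈ Set.Icc (0:ℝ) 1 ∧ ∀ r, 0 ≤ r → r ≤ t → segment ℝ a (w r) ⊆ Q} with hSdef
  have hw0 : w 0 = b := by simp [hwdef]
  have hS0 : (0:ℝ) ∈ S := by
    refine ⟨⟨le_refl _, zero_le_one⟩, fun r h0 h1 => ?_⟩
    have : r = 0 := le_antisymm h1 h0
    rw [this, hw0]; exact hab
  have hSne : S.Nonempty := ⟨0, hS0⟩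
  have hSbdd : BddAbove S := ⟨1, fun t ht => ht.1.2⟩
  set t0 : ℝ := sSup S with ht0def
  have ht00 : 0 ≤ t0 := le_csSup hSbdd hS0
  have ht01 : t0 ≤ 1 := csSup_le hSne (fun t ht => ht.1.2)
  set m : Plane := w t0 with hmdef
  set U : Plane := a - m with hUdef
  -- the stalled segment is in Q
  have hm_seg : segment ℝ a m ⊆ Q := by
    intro x hx
    rw [segment_eq_image'] at hx
    obtain ⟨u, ⟨hu0, hu1⟩, rfl⟩ := hx
    rw [← hQ.closure_eq]
    rw [Metric.mem_closure_iff]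
    intro δ hδ
    set δ' : ℝ := δ / (‖V‖ + 1) with hδ'def
    have hδ' : 0 < δ' := by positivity
    obtain ⟨t, htS, htgt⟩ := exists_lt_of_lt_csSup hSne (show t0 - δ' < t0 by linarith)
    have htle : t ≤ t0 := le_csSup hSbdd htS
    refine ⟨a + u • (w t - a), ?_, ?_⟩
    · exact htS.2 t htS.1.1 (le_refl t) (by rw [segment_eq_image']; exact ⟨u, ⟨hu0, hu1⟩, rfl⟩)
    · have hdiff : (a + u • (m - a)) - (a + u • (w t - a)) = (u * (t0 - t)) • V := by
        simp only [hmdef, hwdef]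
        module
      rw [dist_eq_norm, hdiff, norm_smul]
      have habs : |u * (t0 - t)| ≤ t0 - t := by
        rw [abs_mul]
        rw [abs_of_nonneg hu0, abs_of_nonneg (by linarith : (0:ℝ) ≤ t0 - t)]
        nlinarith
      have h1 : |u * (t0 - t)| * ‖V‖ ≤ (t0 - t) * ‖V‖ :=
        mul_le_mul_of_nonneg_right habs (le_of_lt hV)
      have h2 : (t0 - t) * ‖V‖ < δ' * (‖V‖ + 1) := by nlinarith
      have h3 : δ' * (‖V‖ + 1) = δ := by rw [hδ'def]; exact div_mul_cancel₀ δ (by positivity)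
      calc |u * (t0 - t)| * ‖V‖ ≤ (t0 - t) * ‖V‖ := h1
        _ < δ := by rw [← h3]; exact h2
  have ht0S : t0 ∈ S := by
    refine ⟨⟨ht00, ht01⟩, fun r h0 hr => ?_⟩
    rcases eq_or_lt_of_le hr with heq | hlt
    · rw [heq]; exact hm_seg
    · obtain ⟨t, htS, hrt⟩ := exists_lt_of_lt_csSup hSne hlt
      exact htS.2 r h0 (le_of_lt hrt)
  by_cases ht0eq : t0 = 1
  · have hwc : w 1 = c := by simp [hwdef, hVdef]
    have := ht0S.2 1 zero_le_one (le_of_eq ht0eq.symm)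
    rwa [hwc] at this
  have ht0lt : t0 < 1 := lt_of_le_of_ne ht01 ht0eq
  exfalso
  -- uniform local convexity along the stalled segment
  have hKcpt : IsCompact (segment ℝ a m) := by
    rw [segment_eq_image']
    exact isCompact_Icc.image (by fun_prop)
  have hahull : a ∈ convexHull ℝ ({a, b, c} : Set Plane) :=
    subset_convexHull ℝ _ (by simp)
  have hbhull : b ∈ convexHull ℝ ({a, b, c} : Set Plane) :=
    subset_convexHull ℝ _ (by simp)
  have hchull : c ∈ convexHull ℝ ({a, b, c} : Set Plane) :=
    subset_convexHull ℝ _ (by simp)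
  have hmhull : m ∈ convexHull ℝ ({a, b, c} : Set Plane) := by
    have hmbc : m ∈ segment ℝ b c := by
      rw [segment_eq_image']
      exact ⟨t0, ⟨ht00, ht01⟩, rfl⟩
    exact (convex_convexHull ℝ _).segment_subset hbhull hchull hmbc
  obtain ⟨ε, hε, hεconv⟩ := aux_uniform Q (segment ℝ a m) hKcpt (by
    intro x hx
    refine hconv x ((convex_convexHull ℝ _).segment_subset hahull hmhull hx) ?_
    exact fun y hy => hm_seg ((convex_segment a m).segment_subset (left_mem_segment ℝ a m) hx hy))
  -- parameters
  set N : ℕ := max 4 (Nat.ceil (4 * ‖U‖ / ε)) with hNdef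
  have hN4 : (4:ℝ) ≤ (N:ℕ) := by exact_mod_cast (le_max_left 4 (Nat.ceil (4 * ‖U‖ / ε)) : 4 ≤ N)
  have hN4' : 4 ≤ N := le_max_left _ _
  have hNpos : (0:ℝ) < (N:ℝ) := by linarith
  have hUN : ‖U‖ / N ≤ ε / 4 := by
    have h1 : 4 * ‖U‖ / ε ≤ (N:ℝ) := by
      calc 4 * ‖U‖ / ε ≤ (Nat.ceil (4 * ‖U‖ / ε) : ℝ) := Nat.le_ceil _
        _ ≤ (N:ℝ) := by exact_mod_cast le_max_right 4 (Nat.ceil (4 * ‖U‖ / ε))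
    rw [div_le_div_iff₀ hNpos (by norm_num : (0:ℝ) < 4)]
    have := (div_le_iff₀ (by positivity : (0:ℝ) < ε)).1 h1
    nlinarith
  set h0 : ℝ := min (1 - t0) (ε / (2 * ‖V‖)) with hh0def
  have hh0pos : 0 < h0 := lt_min (by linarith) (by positivity)
  set hk : ℕ → ℝ := fun k => h0 * (2/3)^k with hhkdef
  have hkpos : ∀ k, 0 < hk k := fun k => by positivity
  have hkle : ∀ k, hk k ≤ h0 := by
    intro k
    have h1 : (2/3:ℝ)^k ≤ 1 := pow_le_one₀ (by norm_num) (by norm_num)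
    simp only [hhkdef]
    nlinarith [hh0pos.le]
  have hkV : ∀ k, hk k * ‖V‖ ≤ ε / 2 := by
    intro k
    have h1 : hk k ≤ ε / (2 * ‖V‖) := le_trans (hkle k) (min_le_right _ _)
    have h2 : hk k * ‖V‖ ≤ (ε / (2 * ‖V‖)) * ‖V‖ := mul_le_mul_of_nonneg_right h1 (le_of_lt hV)
    have h3 : (ε / (2 * ‖V‖)) * ‖V‖ = ε/2 := by field_simp
    linarith
  set Hmin : ℝ := h0 * (2/3)^N with hHmindef
  have hHminpos : 0 < Hmin := by positivity
  have hHminle : ∀ k, k ≤ N → Hmin ≤ hk k := by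
    intro k hkN
    have h1 : (2/3:ℝ)^N ≤ (2/3:ℝ)^k := pow_le_pow_of_le_one (by norm_num) (by norm_num) hkN
    simp only [hHmindef, hhkdef]
    nlinarith [hh0pos.le]
  set e : ℕ → Plane := fun j => m + ((j:ℝ)/N) • U with hedef
  set M : ℕ → Plane := fun k => e k + (hk k) • V with hMdef
  have heK : ∀ j, j ≤ N → e j ∈ segment ℝ a m := by
    intro j hj
    rw [segment_symm, segment_eq_image']
    refine ⟨(j:ℝ)/N, ⟨by positivity, ?_⟩, rfl⟩
    rw [div_le_one hNpos]
    exact_mod_cast hj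
  have heQ : ∀ j, j ≤ N → e j ∈ Q := fun j hj => hm_seg (heK j hj)
  -- distances between marked points
  have hdist_e : ∀ j l : ℕ, j ≤ N → l ≤ N → dist (e j) (e l) ≤ (|(j:ℝ) - l| / N) * ‖U‖ := by
    intro j l _ _
    rw [dist_eq_norm]
    have heq : e j - e l = (((j:ℝ) - l)/N) • U := by
      simp only [hedef]
      rw [add_sub_add_left_eq_sub, ← sub_smul]
      congr 1
      ring
    rw [heq, norm_smul, Real.norm_eq_abs, abs_div, abs_of_pos hNpos]
  -- the inductive zipper
  have hMQ : ∀ k, k ≤ N - 2 → M k ∈ Q := by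
    intro k
    induction k with
    | zero =>
      intro _
      have hmem : b + (t0 + h0) • V ∈ segment ℝ b c := by
        rw [segment_eq_image']
        refine ⟨t0 + h0, ⟨by linarith, ?_⟩, by rw [hVdef]⟩
        have := min_le_left (1 - t0) (ε / (2 * ‖V‖))
        rw [← hh0def] at this
        linarith
      have hMeq : M 0 = b + (t0 + h0) • V := by
        simp only [hMdef, hedef, hhkdef, hmdef, hwdef]
        push_cast
        module
      rw [hMeq]
      exact hbc hmem
    | succ k ih =>
      intro hk1
      have hkN : k ≤ N - 2 := le_trans (Nat.le_succ k) hk1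
      have hk3 : k + 3 ≤ N := by omega
      have hC := hεconv (e (k+1)) (heK (k+1) (by omega))
      have hMC : M k ∈ Q ∩ Metric.closedBall (e (k+1)) ε := by
        refine ⟨ih hkN, ?_⟩
        rw [Metric.mem_closedBall, dist_eq_norm]
        have hdiff : M k - e (k+1) = (-(1/(N:ℝ))) • U + (hk k) • V := by
          simp only [hMdef, hedef]
          match_scalars <;> push_cast <;> field_simp <;> try ring
        rw [hdiff]
        calc ‖(-(1/(N:ℝ))) • U + (hk k) • V‖ ≤ ‖(-(1/(N:ℝ))) • U‖ + ‖(hk k) • V‖ := norm_add_le _ _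
          _ = (1/(N:ℝ)) * ‖U‖ + hk k * ‖V‖ := by
              rw [norm_smul, norm_smul, Real.norm_eq_abs, Real.norm_eq_abs, abs_neg,
                abs_of_pos (by positivity : (0:ℝ) < 1/N), abs_of_pos (hkpos k)]
          _ ≤ ε/4 + ε/2 := by
              have h1 : (1/(N:ℝ)) * ‖U‖ = ‖U‖/N := by ring
              have := hkV k
              rw [h1]
              linarith [hUN]
          _ ≤ ε := by linarith
      have he3C : e (k+3) ∈ Q ∩ Metric.closedBall (e (k+1)) ε := by
        refine ⟨heQ _ hk3, ?_⟩
        rw [Metric.mem_closedBall]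
        have hd := hdist_e (k+3) (k+1) hk3 (by omega)
        have h2 : (|((k+3:ℕ):ℝ) - ((k+1:ℕ):ℝ)| / N) * ‖U‖ = 2 * (‖U‖/N) := by
          push_cast
          rw [show ((k:ℝ)+3-((k:ℝ)+1)) = (2:ℝ) by ring,
            abs_of_pos (by norm_num : (0:ℝ) < 2)]
          ring
        rw [h2] at hd
        calc dist (e (k+3)) (e (k+1)) ≤ 2 * (‖U‖/N) := hd
          _ ≤ 2 * (ε/4) := by linarith [hUN]
          _ ≤ ε := by linarith
      have hcomb := hC hMC he3C (by norm_num : (0:ℝ) ≤ 2/3) (by norm_num : (0:ℝ) ≤ 1/3)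
        (by norm_num)
      have hMk1 : M (k+1) = (2/3:ℝ) • M k + (1/3:ℝ) • e (k+3) := by
        simp only [hMdef, hedef, hhkdef, pow_succ]
        match_scalars <;> push_cast <;> field_simp <;> try ring
      rw [hMk1]
      exact hcomb.1
  -- coverage of the thin strip
  have hcov : ∀ γ β : ℝ, 0 ≤ γ → γ ≤ 1 → 0 ≤ β → β ≤ Hmin/2 * min 1 ((N:ℝ)*(1-γ)) →
      m + γ • U + β • V ∈ Q := by
    intro γ β hγ0 hγ1 hβ0 hβle
    have hminnn : 0 ≤ min 1 ((N:ℝ)*(1-γ)) := le_min (by norm_num) (by nlinarith)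
    set k : ℕ := min (Nat.floor (γ * N)) (N - 2) with hkdef2
    have hkN2 : k ≤ N - 2 := min_le_right _ _
    have hkN : k ≤ N := by omega
    have hk2N : k + 2 ≤ N := by omega
    have hkγ : (k:ℝ) ≤ γ * N := by
      calc (k:ℝ) ≤ (Nat.floor (γ * N) : ℝ) := by exact_mod_cast min_le_left _ _
        _ ≤ γ * N := Nat.floor_le (by positivity)
    have hγk2 : γ * N ≤ (k:ℝ) + 2 := by
      by_cases hcase : Nat.floor (γ*N) ≤ N - 2
      · have hkfl : k = Nat.floor (γ*N) := min_eq_left hcase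
        have := Nat.lt_floor_add_one (γ * N)
        rw [← hkfl] at this
        linarith
      · have hkfl : k = N - 2 := min_eq_right (by omega)
        have : ((N:ℝ) - 2) + 2 = (N:ℝ) := by ring
        have hc : (k:ℝ) = (N:ℝ) - 2 := by
          rw [hkfl]
          push_cast [Nat.cast_sub (by omega : 2 ≤ N)]
          ring
        rw [hc]
        nlinarith
    have hminle : min 1 ((N:ℝ)*(1-γ)) ≤ (k:ℝ) + 2 - γ*N := by
      by_cases hcase : Nat.floor (γ*N) ≤ N - 2
      · have hkfl : k = Nat.floor (γ*N) := min_eq_left hcase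
        have h2 := Nat.lt_floor_add_one (γ * N)
        rw [← hkfl] at h2
        calc min 1 ((N:ℝ)*(1-γ)) ≤ 1 := min_le_left _ _
          _ ≤ (k:ℝ) + 2 - γ*N := by linarith
      · have hkfl : k = N - 2 := min_eq_right (by omega)
        have hc : (k:ℝ) = (N:ℝ) - 2 := by
          rw [hkfl]
          push_cast [Nat.cast_sub (by omega : 2 ≤ N)]
          ring
        calc min 1 ((N:ℝ)*(1-γ)) ≤ (N:ℝ)*(1-γ) := min_le_right _ _
          _ = (k:ℝ) + 2 - γ*N := by rw [hc]; ring
    have hβk : β ≤ hk k * ((k:ℝ) + 2 - γ*N) / 2 := by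
      have hHk : Hmin ≤ hk k := hHminle k hkN
      calc β ≤ Hmin/2 * min 1 ((N:ℝ)*(1-γ)) := hβle
        _ ≤ hk k/2 * ((k:ℝ) + 2 - γ*N) := by
            apply mul_le_mul (by linarith) hminle hminnn (by linarith [(hkpos k).le])
        _ = hk k * ((k:ℝ) + 2 - γ*N) / 2 := by ring
    set c1 : ℝ := β / hk k with hc1def
    set c3 : ℝ := (γ*N - k)/2 with hc3def
    set c2 : ℝ := 1 - c1 - c3 with hc2def
    have hc1' : 0 ≤ c1 := by positivity
    have hc3' : 0 ≤ c3 := by rw [hc3def]; linarith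
    have hc2' : 0 ≤ c2 := by
      have : c1 ≤ ((k:ℝ) + 2 - γ*N)/2 := by
        rw [hc1def, div_le_div_iff₀ (hkpos k) (by norm_num : (0:ℝ) < 2)]
        nlinarith [hβk, hkpos k]
      rw [hc2def, hc3def]
      linarith
    have hsum : c1 + c2 + c3 = 1 := by rw [hc2def]; ring
    have hC := hεconv (e k) (heK k hkN)
    have hM_mem : M k ∈ Q ∩ Metric.closedBall (e k) ε := by
      refine ⟨hMQ k hkN2, ?_⟩
      rw [Metric.mem_closedBall, dist_eq_norm]
      have : M k - e k = (hk k) • V := by simp [hMdef]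
      rw [this, norm_smul, Real.norm_eq_abs, abs_of_pos (hkpos k)]
      linarith [hkV k]
    have he_mem : e k ∈ Q ∩ Metric.closedBall (e k) ε :=
      ⟨heQ k hkN, Metric.mem_closedBall_self (le_of_lt hε)⟩
    have he2_mem : e (k+2) ∈ Q ∩ Metric.closedBall (e k) ε := by
      refine ⟨heQ _ hk2N, ?_⟩
      rw [Metric.mem_closedBall]
      have hd := hdist_e (k+2) k hk2N hkN
      have h2 : (|((k+2:ℕ):ℝ) - ((k:ℕ):ℝ)| / N) * ‖U‖ = 2 * (‖U‖/N) := by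
        push_cast
        rw [show ((k:ℝ)+2-(k:ℝ)) = (2:ℝ) by ring,
          abs_of_pos (by norm_num : (0:ℝ) < 2)]
        ring
      rw [h2] at hd
      calc dist (e (k+2)) (e k) ≤ 2 * (‖U‖/N) := hd
        _ ≤ 2 * (ε/4) := by linarith [hUN]
        _ ≤ ε := by linarith
    have hhk0 : hk k ≠ 0 := ne_of_gt (hkpos k)
    have hN0 : (N:ℝ) ≠ 0 := ne_of_gt hNpos
    have hfact1 : c1 * hk k = β := by rw [hc1def]; field_simp
    have hfact2 : c1*(k:ℝ) + c2*(k:ℝ) + c3*((k:ℝ)+2) = γ*(N:ℝ) := by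
      rw [hc2def, hc3def]; ring
    have hMk_eq : M k = m + ((k:ℝ)/(N:ℝ)) • U + (hk k) • V := by
      simp only [hMdef, hedef]
    have hek_eq : e k = m + ((k:ℝ)/(N:ℝ)) • U := by simp only [hedef]
    have hek2_eq : e (k+2) = m + (((k:ℝ)+2)/(N:ℝ)) • U := by
      simp only [hedef]; push_cast; ring_nf
    have hxeq : m + γ • U + β • V = c1 • M k + c2 • e k + c3 • e (k+2) := by
      rw [hMk_eq, hek_eq, hek2_eq]
      exact combo_id m U V γ β (hk k) (k:ℝ) (N:ℝ) c1 c2 c3 hfact1 hsum hfact2 hN0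
    rw [hxeq]
    exact (combo3 (hC) hM_mem he_mem he2_mem hc1' hc2' hc3' hsum).1
  -- push past the stall
  set σ : ℝ := min (Hmin/2) (1 - t0) with hσdef
  have hσpos : 0 < σ := lt_min (by linarith) (by linarith)
  have hsS : t0 + σ ∈ S := by
    refine ⟨⟨by linarith, by linarith [min_le_right (Hmin/2) (1-t0)]⟩, ?_⟩
    intro r hr0 hrs
    by_cases hrt : r ≤ t0
    · exact ht0S.2 r hr0 hrt
    · push_neg at hrt
      intro x hx
      rw [segment_eq_image'] at hx
      obtain ⟨u, ⟨hu0, hu1⟩, rfl⟩ := hx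
      have hxeq : a + u • (w r - a) = m + (1-u) • U + (u*(r-t0)) • V := by
        simp only [hwdef, hUdef, hmdef]
        module
      show a + u • (w r - a) ∈ Q
      rw [hxeq]
      apply hcov (1-u) (u*(r-t0)) (by linarith) (by linarith) (mul_nonneg hu0 (by linarith : (0:ℝ) ≤ r - t0))
      have hσ1 : σ ≤ Hmin/2 := min_le_left _ _
      have hmin_ge : u ≤ min 1 ((N:ℝ)*(1-(1-u))) := by
        refine le_min hu1 ?_
        have hN1 : (1:ℝ) ≤ N := by linarith
        have hNu : (N:ℝ)*(1-(1-u)) = N*u := by ring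
        rw [hNu]
        calc u = 1*u := (one_mul u).symm
          _ ≤ N*u := mul_le_mul_of_nonneg_right hN1 hu0
      have h1 : u*(r-t0) ≤ u*σ :=
        mul_le_mul_of_nonneg_left (show r-t0 ≤ σ by linarith) hu0
      have h2 : u*σ ≤ u*(Hmin/2) := mul_le_mul_of_nonneg_left hσ1 hu0
      calc u*(r-t0) ≤ u*(Hmin/2) := by linarith
        _ = Hmin/2 * u := by ring
        _ ≤ Hmin/2 * min 1 ((N:ℝ)*(1-(1-u))) := by
            apply mul_le_mul_of_nonneg_left hmin_ge (by linarith)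
  have : t0 + σ ≤ t0 := le_csSup hSbdd hsS
  linarith

end AuxProof

/-- If `p, q, z₁, z₂ ∈ P` lie in a unit axis-parallel square, `p` sees `z₁`
within distance 1/2, `q` sees `z₂` within distance 1/2, `z₁` sees `z₂`, but `p` does not
see `q`, then `p` and `q` each see a reflex vertex of `P` lying in the convex hull of the
four points (hence within distance `√2`). -/
theorem blocked_pair_sees_reflex_vertex
    (P : Set Plane) (hP : IsPolygonalRegion P)
    (p q z₁ z₂ : Plane) (hp : p ∈ P) (hq : q ∈ P) (hz₁ : z₁ ∈ P) (hz₂ : z₂ ∈ P)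
    (a : Plane)
    (hsq : ∀ x ∈ ({p, q, z₁, z₂} : Set Plane), ∀ i : Fin 2, a i ≤ x i ∧ x i ≤ a i + 1)
    (h1 : segment ℝ p z₁ ⊆ P) (h2 : segment ℝ q z₂ ⊆ P) (h3 : segment ℝ z₁ z₂ ⊆ P)
    (hd1 : dist p z₁ ≤ 1 / 2) (hd2 : dist q z₂ ≤ 1 / 2)
    (hpq : ¬ segment ℝ p q ⊆ P) :
    ∃ v v' : Plane, IsReflexVertex P v ∧ IsReflexVertex P v' ∧
      v ∈ convexHull ℝ ({p, q, z₁, z₂} : Set Plane) ∧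
      v' ∈ convexHull ℝ ({p, q, z₁, z₂} : Set Plane) ∧
      segment ℝ p v ⊆ P ∧ segment ℝ q v' ⊆ P ∧
      dist p v ≤ Real.sqrt 2 ∧ dist q v' ≤ Real.sqrt 2 := by
  have hPclosed : IsClosed P := hP.1.isClosed
  set Hl : Set Plane := convexHull ℝ ({p, q, z₁, z₂} : Set Plane) with hHldef
  have hHlconv : Convex ℝ Hl := convex_convexHull ℝ _
  have hHlclosed : IsClosed Hl := by
    have hfin : ({p, q, z₁, z₂} : Set Plane).Finite :=
      (((Set.finite_singleton z₂).insert z₁).insert q).insert p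
    exact (hfin.isCompact_convexHull (𝕜 := ℝ)).isClosed
  set Q : Set Plane := P ∩ Hl with hQdef
  have hQclosed : IsClosed Q := hPclosed.inter hHlclosed
  have hpH : p ∈ Hl := subset_convexHull ℝ _ (by simp)
  have hqH : q ∈ Hl := subset_convexHull ℝ _ (by simp)
  have hz₁H : z₁ ∈ Hl := subset_convexHull ℝ _ (by simp)
  have hz₂H : z₂ ∈ Hl := subset_convexHull ℝ _ (by simp)
  have hupg : ∀ x y : Plane, x ∈ Hl → y ∈ Hl → segment ℝ x y ⊆ P → segment ℝ x y ⊆ Q :=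
    fun x y hx hy hseg z hz => ⟨hseg hz, hHlconv.segment_subset hx hy hz⟩
  -- the key claim
  have key : ∀ a' b' c' : Plane, segment ℝ a' b' ⊆ Q → segment ℝ b' c' ⊆ Q →
      ¬ (segment ℝ a' c' ⊆ Q) →
      ∃ v : Plane, IsReflexVertex P v ∧ v ∈ Hl ∧ segment ℝ a' v ⊆ P := by
    intro a' b' c' hab hbc hac
    by_contra hno
    push_neg at hno
    apply hac
    apply sweep Q hQclosed a' b' c' hab hbc
    intro x hxhull hxseg
    have hxHl : x ∈ Hl := by
      have ha'H : a' ∈ Hl := (hab (left_mem_segment ℝ a' b')).2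
      have hb'H : b' ∈ Hl := (hab (right_mem_segment ℝ a' b')).2
      have hc'H : c' ∈ Hl := (hbc (right_mem_segment ℝ b' c')).2
      have hsub : ({a', b', c'} : Set Plane) ⊆ Hl := by
        intro y hy
        rcases hy with rfl | rfl | rfl
        exacts [ha'H, hb'H, hc'H]
      exact convexHull_min hsub hHlconv hxhull
    have hxP : x ∈ P := (hxseg (right_mem_segment ℝ a' x)).1
    have hxsegP : segment ℝ a' x ⊆ P := fun y hy => (hxseg hy).1
    by_cases hxint : x ∈ interior P
    · obtain ⟨ρ, hρ, hball⟩ := Metric.isOpen_iff.1 isOpen_interior x hxint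
      refine ⟨ρ/2, by linarith, ?_⟩
      have hsubP : Metric.closedBall x (ρ/2) ⊆ P := fun z hz =>
        interior_subset (hball (lt_of_le_of_lt (Metric.mem_closedBall.1 hz) (by linarith)))
      have heq : Q ∩ Metric.closedBall x (ρ/2) = Hl ∩ Metric.closedBall x (ρ/2) := by
        ext z
        constructor
        · rintro ⟨⟨_, hzH⟩, hzB⟩; exact ⟨hzH, hzB⟩
        · rintro ⟨hzH, hzB⟩; exact ⟨⟨hsubP hzB, hzH⟩, hzB⟩
      rw [heq]
      exact hHlconv.inter (convex_closedBall x (ρ/2))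
    · have hxfr : x ∈ frontier P := by
        rw [hPclosed.frontier_eq]
        exact ⟨hxP, hxint⟩
      have hnrefl : ¬ IsReflexVertex P x := fun hrefl => hno x hrefl hxHl hxsegP
      rw [IsReflexVertex] at hnrefl
      push_neg at hnrefl
      obtain ⟨ρ, hρpos, hρle, hρconv⟩ := hnrefl hxfr 1 one_pos
      refine ⟨ρ, hρpos, ?_⟩
      have heq : Q ∩ Metric.closedBall x ρ = (P ∩ Metric.closedBall x ρ) ∩ Hl := by
        ext z
        constructor
        · rintro ⟨⟨hzP, hzH⟩, hzB⟩; exact ⟨⟨hzP, hzB⟩, hzH⟩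
        · rintro ⟨⟨hzP, hzB⟩, hzH⟩; exact ⟨⟨hzP, hzH⟩, hzB⟩
      rw [heq]
      exact hρconv.inter hHlconv
  -- not seeing within Q
  have hpqQ : ¬ segment ℝ p q ⊆ Q := fun h => hpq (fun y hy => (h hy).1)
  have hqpQ : ¬ segment ℝ q p ⊆ Q := by rw [segment_symm]; exact hpqQ
  -- find v for p
  have hv : ∃ v : Plane, IsReflexVertex P v ∧ v ∈ Hl ∧ segment ℝ p v ⊆ P := by
    by_cases hpz2 : segment ℝ p z₂ ⊆ P
    · exact key p z₂ q (hupg _ _ hpH hz₂H hpz2)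
        (hupg _ _ hz₂H hqH (by rw [segment_symm]; exact h2)) hpqQ
    · exact key p z₁ z₂ (hupg _ _ hpH hz₁H h1) (hupg _ _ hz₁H hz₂H h3)
        (fun h => hpz2 (fun y hy => (h hy).1))
  have hv' : ∃ v : Plane, IsReflexVertex P v ∧ v ∈ Hl ∧ segment ℝ q v ⊆ P := by
    by_cases hqz1 : segment ℝ q z₁ ⊆ P
    · exact key q z₁ p (hupg _ _ hqH hz₁H hqz1)
        (hupg _ _ hz₁H hpH (by rw [segment_symm]; exact h1)) hqpQ
    · exact key q z₂ z₁ (hupg _ _ hqH hz₂H h2)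
        (hupg _ _ hz₂H hz₁H (by rw [segment_symm]; exact h3))
        (fun h => hqz1 (fun y hy => (h hy).1))
  obtain ⟨v, hvrefl, hvH, hvseg⟩ := hv
  obtain ⟨v', hv'refl, hv'H, hv'seg⟩ := hv'
  -- distance bound
  set B : Set Plane := {x : Plane | ∀ i : Fin 2, a i ≤ x i ∧ x i ≤ a i + 1} with hBdef
  have hBconv : Convex ℝ B := by
    intro x hx y hy s t hs ht hst
    intro i
    have hxi := hx i
    have hyi := hy i
    have : (s • x + t • y) i = s * x i + t * y i := by
      simp [PiLp.add_apply, PiLp.smul_apply, smul_eq_mul]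
    rw [this]
    constructor
    · have hsum : (s+t) * a i = a i := by rw [hst, one_mul]
      nlinarith [mul_le_mul_of_nonneg_left hxi.1 hs, mul_le_mul_of_nonneg_left hyi.1 ht, hsum]
    · have hsum : (s+t) * (a i + 1) = a i + 1 := by rw [hst, one_mul]
      nlinarith [mul_le_mul_of_nonneg_left hxi.2 hs, mul_le_mul_of_nonneg_left hyi.2 ht, hsum]
  have hHlB : Hl ⊆ B := convexHull_min (fun x hx i => hsq x hx i) hBconv
  have hdistB : ∀ x y : Plane, x ∈ B → y ∈ B → dist x y ≤ Real.sqrt 2 := by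
    intro x y hx hy
    rw [EuclideanSpace.dist_eq]
    have hbound : ∀ i : Fin 2, dist (x i) (y i) ^ 2 ≤ 1 := by
      intro i
      have h1 := hx i
      have h2 := hy i
      have : |x i - y i| ≤ 1 := by
        rw [abs_le]
        constructor <;> linarith [h1.1, h1.2, h2.1, h2.2]
      rw [Real.dist_eq]
      nlinarith [abs_nonneg (x i - y i)]
    apply Real.sqrt_le_sqrt
    rw [Fin.sum_univ_two]
    linarith [hbound 0, hbound 1]
  have hpB : p ∈ B := hHlB hpH
  have hqB : q ∈ B := hHlB hqH
  have hvB : v ∈ B := hHlB hvH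
  have hv'B : v' ∈ B := hHlB hv'H
  exact ⟨v, v', hvrefl, hv'refl, hvH, hv'H, hvseg, hv'seg,
    hdistB p v hpB hvB, hdistB q v' hqB hv'B⟩
end

section
/- Let P be a simple polygon whose set R of reflex vertices is nonempty, let p ∈ P, and let u ∈ R be a reflex vertex minimizing the geodesic distance d_P(p, ·) over R, i.e., d_P(p,u) ≤ d_P(p,v) for all v ∈ R. Then the closed segment pu is contained in P, and consequently d_P(p,u) = |p − u|. -/
open scoped BigOperators ENNReal

section AuxGeodesicProofs
open Set

lemma geoDist_le_var {P : Set Plane} {p q : Plane} {f : ℝ → Plane}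
    (hc : ContinuousOn f (Set.Icc 0 1)) (hm : Set.MapsTo f (Set.Icc 0 1) P)
    (h0 : f 0 = p) (h1 : f 1 = q) :
    geoDist P p q ≤ eVariationOn f (Set.Icc 0 1) :=
  iInf₂_le f ⟨hc, hm, h0, h1⟩

lemma geoDist_self {P : Set Plane} {p : Plane} (hp : p ∈ P) : geoDist P p p = 0 := by
  refine le_antisymm ?_ zero_le
  refine le_trans (geoDist_le_var (f := fun _ => p) continuousOn_const
    (fun t _ => hp) rfl rfl) ?_
  rw [eVariationOn.constant_on]
  intro a ha b hb
  obtain ⟨_, _, rfl⟩ := ha; obtain ⟨_, _, rfl⟩ := hb; rfl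

lemma edist_le_geoDist (P : Set Plane) (p q : Plane) :
    edist p q ≤ geoDist P p q := by
  refine le_iInf₂ fun f hf => ?_
  obtain ⟨hc, hm, h0, h1⟩ := hf
  calc edist p q = edist (f 0) (f 1) := by rw [h0, h1]
    _ ≤ eVariationOn f (Set.Icc 0 1) :=
      eVariationOn.edist_le f (by simp) (by simp)

lemma exists_path_of_geoDist_lt {P : Set Plane} {p q : Plane} {c : ℝ≥0∞}
    (h : geoDist P p q < c) :
    ∃ f : ℝ → Plane, Continuous f ∧ (∀ t, f t ∈ P) ∧ f 0 = p ∧ f 1 = q ∧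
      eVariationOn f (Set.Icc 0 1) < c := by
  rw [geoDist] at h
  rw [iInf_lt_iff] at h
  obtain ⟨f, hf⟩ := h
  rw [iInf_lt_iff] at hf
  obtain ⟨⟨hc, hm, h0, h1⟩, hvar⟩ := hf
  set cl : ℝ → ℝ := fun t => max 0 (min 1 t) with hcl
  have hclmem : ∀ t, cl t ∈ Set.Icc (0:ℝ) 1 := by
    intro t
    constructor
    · exact le_max_left _ _
    · simp [hcl]
  have hcleq : Set.EqOn (f ∘ cl) f (Set.Icc 0 1) := by
    intro t ht
    simp only [Function.comp, hcl]
    rw [min_eq_right ht.2, max_eq_right ht.1]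
  refine ⟨f ∘ cl, ?_, ?_, ?_, ?_, ?_⟩
  · exact hc.comp_continuous (continuous_const.max (continuous_const.min continuous_id)) hclmem
  · exact fun t => hm (hclmem t)
  · rw [hcleq (by norm_num : (0:ℝ) ∈ Set.Icc (0:ℝ) 1)]; exact h0
  · rw [hcleq (by norm_num : (1:ℝ) ∈ Set.Icc (0:ℝ) 1)]; exact h1
  · rwa [eVariationOn.eq_of_eqOn hcleq]

lemma geoDist_le_edist_of_segment (P : Set Plane) (p q : Plane)
    (h : segment ℝ p q ⊆ P) : geoDist P p q ≤ edist p q := by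
  set f : ℝ → Plane := fun t => p + t • (q - p) with hf
  have hmaps : Set.MapsTo f (Set.Icc 0 1) P := by
    intro t ht
    apply h
    rw [segment_eq_image']
    exact ⟨t, ht, rfl⟩
  have hlip : LipschitzWith ‖q - p‖₊ f := by
    apply LipschitzWith.of_dist_le_mul
    intro s t
    have hst : f s - f t = (s - t) • (q - p) := by
      simp only [hf]; rw [add_sub_add_left_eq_sub, ← sub_smul]
    rw [dist_eq_norm, hst, norm_smul, Real.dist_eq, coe_nnnorm, mul_comm]
    simp [Real.norm_eq_abs]
  refine le_trans (iInf₂_le f ⟨hlip.continuous.continuousOn, hmaps, by simp [hf], by simp [hf]⟩) ?_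
  have h1 : eVariationOn (f ∘ id) (Set.Icc (0:ℝ) 1) ≤ ‖q - p‖₊ * eVariationOn id (Set.Icc (0:ℝ) 1) :=
    hlip.lipschitzOnWith.comp_eVariationOn_le (Set.mapsTo_univ _ _)
  have h2 : eVariationOn (id : ℝ → ℝ) (Set.Icc 0 1) ≤ 1 := by
    have := (monotoneOn_id (s := Set.Icc (0:ℝ) 1)).eVariationOn_le
      (Set.left_mem_Icc.2 one_pos.le) (Set.right_mem_Icc.2 one_pos.le)
    simpa using this
  calc eVariationOn f (Set.Icc (0:ℝ) 1) = eVariationOn (f ∘ id) (Set.Icc 0 1) := rfl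
    _ ≤ ‖q - p‖₊ * eVariationOn id (Set.Icc (0:ℝ) 1) := h1
    _ ≤ ‖q - p‖₊ * 1 := by gcongr
    _ = edist p q := by rw [mul_one, edist_comm, edist_nndist, nndist_eq_nnnorm]

lemma geoDist_triangle (P : Set Plane) (x y z : Plane) :
    geoDist P x z ≤ geoDist P x y + geoDist P y z := by
  by_cases hxy : geoDist P x y = ⊤
  · rw [hxy, top_add]; exact le_top
  by_cases hyz : geoDist P y z = ⊤
  · rw [hyz, add_top]; exact le_top
  refine ENNReal.le_of_forall_pos_le_add fun ε hε hlt => ?_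
  have hε2 : (0:ℝ≥0∞) < ε / 2 := by
    simp [ENNReal.div_pos_iff, hε.ne']
  obtain ⟨f, hfc, hfm, hf0, hf1, hfv⟩ :=
    exists_path_of_geoDist_lt (ENNReal.lt_add_right hxy hε2.ne')
  obtain ⟨g, hgc, hgm, hg0, hg1, hgv⟩ :=
    exists_path_of_geoDist_lt (ENNReal.lt_add_right hyz hε2.ne')
  set F : ℝ → Plane := fun t => if t ≤ 1/2 then f (2*t) else g (2*t - 1) with hF
  have hjoin : ∀ t : ℝ, t = 1/2 → f (2*t) = g (2*t - 1) := by
    intro t ht; subst ht; norm_num [hf1, hg0]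
  have hFc : Continuous F := by
    refine Continuous.if_le ?_ ?_ continuous_id continuous_const hjoin
    · exact hfc.comp (by continuity)
    · exact hgc.comp (by continuity)
  have hFm : ∀ t, F t ∈ P := by
    intro t
    by_cases h : t ≤ 1/2 <;> simp only [hF, h, if_true, if_false] <;>
      [exact hfm _; exact hgm _]
  have hF0 : F 0 = x := by norm_num [hF, hf0]
  have hF1 : F 1 = z := by norm_num [hF, hg1]
  have hEq1 : Set.EqOn F (f ∘ fun t => 2*t) (Set.Icc 0 (1/2)) := by
    intro t ht; simp only [hF, Function.comp, if_pos ht.2]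
  have hEq2 : Set.EqOn F (g ∘ fun t => 2*t - 1) (Set.Icc (1/2) 1) := by
    intro t ht
    rcases eq_or_lt_of_le ht.1 with h | h
    · simp only [hF, Function.comp, if_pos h.symm.le]
      exact hjoin t h.symm
    · simp only [hF, Function.comp, if_neg (not_le.2 h)]
  have himg1 : (fun t : ℝ => 2*t) '' Set.Icc 0 (1/2) = Set.Icc (0:ℝ) 1 := by
    rw [show (fun t : ℝ => 2*t) = fun t : ℝ => 2*t + 0 by ext t; ring]
    rw [Set.image_affine_Icc' (by norm_num : (0:ℝ) < 2)]
    norm_num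
  have himg2 : (fun t : ℝ => 2*t - 1) '' Set.Icc (1/2) 1 = Set.Icc (0:ℝ) 1 := by
    rw [show (fun t : ℝ => 2*t - 1) = fun t : ℝ => 2*t + (-1) by ext t; ring]
    rw [Set.image_affine_Icc' (by norm_num : (0:ℝ) < 2)]
    norm_num
  have hmono : ∀ c d : ℝ, MonotoneOn (fun t : ℝ => 2*t + c) (Set.Icc d (d+1/2)) := by
    intro c d s _ t _ hst
    simp only
    nlinarith
  have hv1 : eVariationOn F (Set.Icc 0 (1/2)) = eVariationOn f (Set.Icc 0 1) := by
    rw [eVariationOn.eq_of_eqOn hEq1]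
    have := eVariationOn.comp_eq_of_monotoneOn f (fun t : ℝ => 2*t)
      (by simpa using hmono 0 0 : MonotoneOn _ (Set.Icc (0:ℝ) (1/2)))
    rw [this, himg1]
  have hv2 : eVariationOn F (Set.Icc (1/2) 1) = eVariationOn g (Set.Icc 0 1) := by
    rw [eVariationOn.eq_of_eqOn hEq2]
    have h2 : MonotoneOn (fun t : ℝ => 2*t - 1) (Set.Icc (1/2:ℝ) 1) := by
      have := hmono (-1) (1/2)
      norm_num at this
      intro s hs t ht hst
      exact this hs ht hst
    have := eVariationOn.comp_eq_of_monotoneOn g (fun t : ℝ => 2*t - 1) h2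
    rw [this, himg2]
  have hsplit : eVariationOn F (Set.Icc 0 1) =
      eVariationOn F (Set.Icc 0 (1/2)) + eVariationOn F (Set.Icc (1/2) 1) := by
    have := eVariationOn.Icc_add_Icc F (s := Set.univ)
      (by norm_num : (0:ℝ) ≤ 1/2) (by norm_num : (1/2:ℝ) ≤ 1) (Set.mem_univ _)
    simpa using this.symm
  calc geoDist P x z ≤ eVariationOn F (Set.Icc 0 1) :=
        geoDist_le_var hFc.continuousOn (fun t _ => hFm t) hF0 hF1
    _ = eVariationOn f (Set.Icc 0 1) + eVariationOn g (Set.Icc 0 1) := by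
        rw [hsplit, hv1, hv2]
    _ ≤ (geoDist P x y + ε/2) + (geoDist P y z + ε/2) := add_le_add hfv.le hgv.le
    _ = geoDist P x y + geoDist P y z + ε := by
        rw [add_add_add_comm, ENNReal.add_halves]

lemma isClosed_segment' (a b : Plane) : IsClosed (segment ℝ a b) := by
  rw [segment_eq_image']
  exact (isCompact_Icc.image (by continuity)).isClosed

lemma seg_point_mem {v x : Plane} {t : ℝ} (ht : t ∈ Set.Icc (0:ℝ) 1) :
    v + t • (x - v) ∈ segment ℝ v x := by
  rw [segment_eq_image']
  exact ⟨t, ht, rfl⟩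

lemma seg_sub_seg {v x : Plane} {s t : ℝ} (hs : 0 ≤ s) (hst : s ≤ t) (ht : t ≤ 1) :
    v + s • (x - v) ∈ segment ℝ v (v + t • (x - v)) := by
  rcases eq_or_lt_of_le (hs.trans hst) with h | h
  · have hs0 : s = 0 := le_antisymm (by linarith) hs
    rw [segment_eq_image']
    exact ⟨0, by norm_num, by rw [hs0]; simp⟩
  · rw [segment_eq_image']
    refine ⟨s / t, ⟨div_nonneg hs h.le, div_le_one_of_le₀ hst h.le⟩, ?_⟩
    show v + (s / t) • (v + t • (x - v) - v) = v + s • (x - v)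
    rw [add_sub_cancel_left, smul_smul, div_mul_cancel₀ _ h.ne']

lemma dist_seg_le {v x : Plane} {t : ℝ} (ht : t ∈ Set.Icc (0:ℝ) 1) :
    dist v (v + t • (x - v)) ≤ dist v x := by
  rw [dist_eq_norm, dist_eq_norm]
  have : v - (v + t • (x - v)) = (-t) • (x - v) := by
    rw [neg_smul]; abel
  rw [this, norm_smul, norm_neg]
  have h1 : ‖x - v‖ = ‖v - x‖ := by rw [norm_sub_rev]
  rw [Real.norm_eq_abs, abs_of_nonneg ht.1, h1]
  nlinarith [norm_nonneg (v - x), ht.2]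

/-- Local star-shapedness of a closed set with polygonal frontier. -/
lemma local_star {P : Set Plane} (hPc : IsClosed P)
    (E : Finset (Plane × Plane))
    (hfr : frontier P = ⋃ e ∈ E, segment ℝ e.1 e.2)
    (v : Plane) (hv : v ∈ P) :
    ∃ ρ > (0:ℝ), ∀ x ∈ P, dist v x ≤ ρ → segment ℝ v x ⊆ P := by
  classical
  have hfrP : frontier P ⊆ P := by
    have := frontier_subset_closure (s := P)
    rwa [hPc.closure_eq] at this
  by_cases hvf : v ∈ frontier P
  swap
  · -- interior point
    have hvi : v ∈ interior P := by
      rw [hPc.frontier_eq] at hvf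
      simp only [Set.mem_diff, not_and, not_not] at hvf
      exact hvf hv
    obtain ⟨ε, hε, hball⟩ := Metric.isOpen_iff.1 isOpen_interior v hvi
    refine ⟨ε/2, by positivity, fun x hx hdx z hz => ?_⟩
    rw [segment_eq_image'] at hz
    obtain ⟨t, ht, rfl⟩ := hz
    have : dist v (v + t • (x - v)) ≤ ε/2 := (dist_seg_le ht).trans hdx
    exact interior_subset (hball (by
      rw [Metric.mem_ball, dist_comm]
      linarith))
  -- frontier point
  · -- choose ρ avoiding all edges not through v
    have key : ∃ ρ > (0:ℝ), ∀ z ∈ frontier P, dist v z ≤ ρ →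
        ∃ e ∈ E, v ∈ segment ℝ e.1 e.2 ∧ z ∈ segment ℝ e.1 e.2 := by
      set s := E.filter (fun e => v ∉ segment ℝ e.1 e.2) with hs
      have hpos : ∀ e ∈ s, 0 < Metric.infDist v (segment ℝ e.1 e.2) := by
        intro e he
        rw [Finset.mem_filter] at he
        exact ((isClosed_segment' e.1 e.2).notMem_iff_infDist_pos
          ⟨e.1, left_mem_segment ℝ e.1 e.2⟩).1 he.2
      rcases s.eq_empty_or_nonempty with hse | hse
      · refine ⟨1, one_pos, fun z hz _ => ?_⟩
        rw [hfr] at hz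
        simp only [Set.mem_iUnion] at hz
        obtain ⟨e, he, hze⟩ := hz
        refine ⟨e, he, ?_, hze⟩
        by_contra hne
        have : e ∈ s := Finset.mem_filter.2 ⟨he, hne⟩
        rw [hse] at this
        exact absurd this (Finset.notMem_empty e)
      · set ρ := (s.inf' hse (fun e => Metric.infDist v (segment ℝ e.1 e.2))) / 2 with hρ
        have hρpos : 0 < ρ := by
          apply half_pos
          rw [Finset.lt_inf'_iff]
          exact fun e he => hpos e he
        refine ⟨ρ, hρpos, fun z hz hdz => ?_⟩
        rw [hfr] at hz
        simp only [Set.mem_iUnion] at hz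
        obtain ⟨e, he, hze⟩ := hz
        refine ⟨e, he, ?_, hze⟩
        by_contra hne
        have hes : e ∈ s := Finset.mem_filter.2 ⟨he, hne⟩
        have h1 : Metric.infDist v (segment ℝ e.1 e.2) ≤ dist v z :=
          Metric.infDist_le_dist_of_mem hze
        have h2 : s.inf' hse (fun e => Metric.infDist v (segment ℝ e.1 e.2)) ≤
            Metric.infDist v (segment ℝ e.1 e.2) := Finset.inf'_le _ hes
        have h4 : ρ < s.inf' hse (fun e => Metric.infDist v (segment ℝ e.1 e.2)) := by
          rw [hρ]
          apply half_lt_self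
          rw [Finset.lt_inf'_iff]
          exact fun e he => hpos e he
        linarith
    obtain ⟨ρ, hρpos, hkey⟩ := key
    refine ⟨ρ, hρpos, fun x hx hdx => ?_⟩
    rcases eq_or_ne x v with rfl | hxv
    · rw [segment_same]
      simp only [Set.singleton_subset_iff]
      assumption
    by_cases hxfr : x ∈ frontier P
    · obtain ⟨e, _, hve, hxe⟩ := hkey x hxfr hdx
      exact fun z hz =>
        hfrP (hfr ▸ Set.mem_iUnion₂.2 ⟨e, ‹e ∈ E›,
          (convex_segment e.1 e.2).segment_subset hve hxe hz⟩)
    · have hxi : x ∈ interior P := by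
        rw [hPc.frontier_eq] at hxfr
        simp only [Set.mem_diff, not_and, not_not] at hxfr
        exact hxfr hx
      set γ : ℝ → Plane := fun t => v + t • (x - v) with hγ
      have hγc : Continuous γ := by continuity
      set T : Set ℝ := Set.Icc 0 1 ∩ γ ⁻¹' (frontier P) with hT
      have hT0 : (0:ℝ) ∈ T := by
        constructor
        · norm_num
        · simp only [Set.mem_preimage, hγ]
          simpa using hvf
      have hTc : IsCompact T :=
        (isCompact_Icc.inter_right (isClosed_frontier.preimage hγc))
      have hTne : T.Nonempty := ⟨0, hT0⟩
      set σ := sSup T with hσ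
      have hσT : σ ∈ T := hTc.sSup_mem hTne
      have hσ1 : σ ≤ 1 := (hσT.1).2
      have hσ0 : 0 ≤ σ := (hσT.1).1
      have hσlt : σ < 1 := by
        rcases eq_or_lt_of_le hσ1 with h | h
        · exfalso
          have := hσT.2
          rw [h] at this
          simp only [Set.mem_preimage, hγ] at this
          simp only [smul_sub, one_smul] at this
          have hx1 : γ 1 = x := by simp [hγ]
          rw [hPc.frontier_eq] at this
          have : x ∈ P \ interior P := by
            convert this using 2 <;> simp [hγ]
          exact this.2 hxi
        · exact h
      -- initial piece [0, σ] lies in the frontier (hence in P)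
      have hinit : ∀ t ∈ Set.Icc (0:ℝ) σ, γ t ∈ P := by
        intro t htm
        rcases eq_or_lt_of_le hσ0 with h0 | h0
        · have : t = 0 := le_antisymm (htm.2.trans h0.symm.le) htm.1
          rw [this]; simpa [hγ] using hv
        · have hσfr : γ σ ∈ frontier P := hσT.2
          have hdσ : dist v (γ σ) ≤ ρ := by
            have := dist_seg_le (v := v) (x := x) ⟨hσ0, hσ1⟩
            exact le_trans this hdx
          obtain ⟨e, _, hve, hσe⟩ := hkey (γ σ) hσfr hdσ
          have hsub : segment ℝ v (γ σ) ⊆ segment ℝ e.1 e.2 :=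
            (convex_segment e.1 e.2).segment_subset hve hσe
          have : γ t ∈ segment ℝ v (γ σ) := seg_sub_seg htm.1 htm.2 hσ1
          exact hfrP (hfr ▸ Set.mem_iUnion₂.2 ⟨e, ‹e ∈ E›, hsub this⟩)
      -- tail piece (σ, 1) lies in the interior
      have htail : γ '' Set.Ioo σ 1 ⊆ interior P := by
        have hpre : IsPreconnected (γ '' Set.Ioo σ 1) :=
          (isPreconnected_Ioo).image γ hγc.continuousOn
        have hsub : γ '' Set.Ioo σ 1 ⊆ interior P ∪ Pᶜ := by
          rintro z ⟨t, ht, rfl⟩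
          have htT : t ∉ T := fun h => absurd (le_csSup hTc.bddAbove h) (not_le.2 ht.1)
          have htIcc : t ∈ Set.Icc (0:ℝ) 1 := ⟨hσ0.trans ht.1.le, ht.2.le⟩
          have : γ t ∉ frontier P := fun h => htT ⟨htIcc, h⟩
          rw [hPc.frontier_eq] at this
          by_cases hzP : γ t ∈ P
          · left
            by_contra hni
            exact this ⟨hzP, hni⟩
          · right; exact hzP
        have hne : (γ '' Set.Ioo σ 1 ∩ interior P).Nonempty := by
          obtain ⟨δ, hδ, hball⟩ := Metric.isOpen_iff.1 (isOpen_interior.preimage hγc) 1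
            (by simp only [Set.mem_preimage, hγ, smul_sub, one_smul]; simpa [hγ] using hxi)
          set t := max ((σ+1)/2) (1 - δ/2) with htdef
          have ht1 : t < 1 := by
            apply max_lt <;> [linarith; linarith]
          have htσ : σ < t := lt_of_lt_of_le (by linarith) (le_max_left _ _)
          have htb : t ∈ Metric.ball (1:ℝ) δ := by
            rw [Metric.mem_ball, Real.dist_eq, abs_sub_lt_iff]
            constructor
            · linarith
            · have : 1 - δ/2 ≤ t := le_max_right _ _
              linarith
          exact ⟨γ t, ⟨t, ⟨htσ, ht1⟩, rfl⟩, hball htb⟩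
        exact (hpre.subset_left_of_subset_union isOpen_interior
          (hPc.isOpen_compl) (by simp [Set.disjoint_left]; exact fun a ha => interior_subset ha)
          hsub hne)
      -- assemble
      intro z hz
      rw [segment_eq_image'] at hz
      obtain ⟨t, ht, rfl⟩ := hz
      by_cases h1 : t ≤ σ
      · exact hinit t ⟨ht.1, h1⟩
      · rcases eq_or_lt_of_le ht.2 with h2 | h2
        · rw [h2]; simpa [hγ] using hx
        · exact interior_subset (htail ⟨t, ⟨not_le.1 h1, h2⟩, rfl⟩)

lemma connectedSpace_of_homeo {P : Set Plane} (h : HomeoToDisk P) :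
    ConnectedSpace ↥P := by
  obtain ⟨e⟩ := h
  have h1 : IsConnected (unitDisk) := by
    refine ⟨⟨0, by simp [unitDisk]⟩, ?_⟩
    exact (convex_closedBall (0:Plane) 1).isPreconnected
  have h2 : ConnectedSpace ↥unitDisk := isConnected_iff_connectedSpace.1 h1
  have h3 : IsConnected (Set.univ : Set ↥P) := by
    have : (Set.univ : Set ↥P) = e.symm '' Set.univ := by
      rw [Set.image_univ]
      exact (e.symm.surjective.range_eq).symm
    rw [this]
    exact (isConnected_univ).image _ e.symm.continuous.continuousOn
  exact connectedSpace_iff_univ.2 h3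

lemma geoDist_ne_top {P : Set Plane} (hPc : IsClosed P) (hH : HomeoToDisk P)
    (E : Finset (Plane × Plane))
    (hfr : frontier P = ⋃ e ∈ E, segment ℝ e.1 e.2)
    {p q : Plane} (hp : p ∈ P) (hq : q ∈ P) :
    geoDist P p q ≠ ⊤ := by
  have : ConnectedSpace ↥P := connectedSpace_of_homeo hH
  set S : Set ↥P := {y : ↥P | geoDist P p ↑y ≠ ⊤} with hS
  have hopen : IsOpen S := by
    rw [Metric.isOpen_iff]
    rintro y hy
    obtain ⟨ρ, hρ, hstar⟩ := local_star hPc E hfr ↑y y.2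
    refine ⟨ρ, hρ, fun z hz => ?_⟩
    rw [Metric.mem_ball, Subtype.dist_eq] at hz
    have hseg : segment ℝ (↑y) (↑z) ⊆ P :=
      hstar ↑z z.2 (by rw [dist_comm]; exact hz.le)
    have h1 : geoDist P p ↑z ≤ geoDist P p ↑y + geoDist P ↑y ↑z :=
      geoDist_triangle P p ↑y ↑z
    have h2 : geoDist P ↑y ↑z ≤ edist (↑y : Plane) ↑z :=
      geoDist_le_edist_of_segment P _ _ hseg
    have : geoDist P p ↑z < ⊤ :=
      lt_of_le_of_lt (h1.trans (add_le_add_right h2 _))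
        (ENNReal.add_lt_top.2 ⟨lt_top_iff_ne_top.2 hy, edist_lt_top _ _⟩)
    exact this.ne
  have hclosed : IsClosed S := by
    rw [← isOpen_compl_iff, Metric.isOpen_iff]
    rintro y hy
    obtain ⟨ρ, hρ, hstar⟩ := local_star hPc E hfr ↑y y.2
    refine ⟨ρ, hρ, fun z hz => ?_⟩
    rw [Metric.mem_ball, Subtype.dist_eq] at hz
    intro hzS
    apply hy
    have hseg : segment ℝ (↑z) (↑y) ⊆ P := by
      rw [segment_symm]
      exact hstar ↑z z.2 (by rw [dist_comm]; exact hz.le)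
    have h1 : geoDist P p ↑y ≤ geoDist P p ↑z + geoDist P ↑z ↑y :=
      geoDist_triangle P p ↑z ↑y
    have h2 : geoDist P ↑z ↑y ≤ edist (↑z : Plane) ↑y :=
      geoDist_le_edist_of_segment P _ _ hseg
    have : geoDist P p ↑y < ⊤ :=
      lt_of_le_of_lt (h1.trans (add_le_add_right h2 _))
        (ENNReal.add_lt_top.2 ⟨lt_top_iff_ne_top.2 hzS, edist_lt_top _ _⟩)
    exact this.ne
  have huniv : S = Set.univ := by
    apply IsClopen.eq_univ ⟨hclosed, hopen⟩
    exact ⟨⟨p, hp⟩, by simp [hS, geoDist_self hp]⟩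
  have : (⟨q, hq⟩ : ↥P) ∈ S := huniv ▸ Set.mem_univ _
  exact this

/-- Non-reflex points of `P` admit arbitrarily small convex intersections with balls. -/
lemma convex_nbhd {P : Set Plane} (hPc : IsClosed P) {v : Plane} (hv : v ∈ P)
    (hnr : ¬IsReflexVertex P v) {ε : ℝ} (hε : 0 < ε) :
    ∃ ρ : ℝ, 0 < ρ ∧ ρ ≤ ε ∧ Convex ℝ (P ∩ Metric.closedBall v ρ) := by
  by_cases hvf : v ∈ frontier P
  · rw [IsReflexVertex] at hnr
    push_neg at hnr
    obtain ⟨ρ, hρ1, hρ2, hρ3⟩ := hnr hvf ε hε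
    exact ⟨ρ, hρ1, hρ2, hρ3⟩
  · have hvi : v ∈ interior P := by
      rw [hPc.frontier_eq] at hvf
      simp only [Set.mem_diff, not_and, not_not] at hvf
      exact hvf hv
    obtain ⟨δ, hδ, hball⟩ := Metric.isOpen_iff.1 isOpen_interior v hvi
    refine ⟨min ε (δ/2), by positivity, min_le_left _ _, ?_⟩
    have : P ∩ Metric.closedBall v (min ε (δ/2)) = Metric.closedBall v (min ε (δ/2)) := by
      apply Set.inter_eq_self_of_subset_right
      intro z hz
      rw [Metric.mem_closedBall] at hz
      exact interior_subset (hball (by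
        rw [Metric.mem_ball]
        calc dist z v ≤ min ε (δ/2) := hz
          _ ≤ δ/2 := min_le_right _ _
          _ < δ := by linarith))
    rw [this]
    exact convex_closedBall v _

lemma geoDist_comm (P : Set Plane) (p q : Plane) :
    geoDist P p q = geoDist P q p := by
  have key : ∀ x y : Plane, geoDist P x y ≤ geoDist P y x := by
    intro x y
    refine le_iInf₂ fun f hf => ?_
    obtain ⟨hc, hm, h0, h1⟩ := hf
    set φ : ℝ → ℝ := fun t => 1 - t with hφ
    have hφa : AntitoneOn φ (Set.Icc 0 1) := by
      intro a _ b _ hab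
      simp only [hφ]
      linarith
    have himg : φ '' Set.Icc 0 1 = Set.Icc (0:ℝ) 1 := by
      ext t
      simp only [hφ, Set.mem_image, Set.mem_Icc]
      constructor
      · rintro ⟨s, hs, rfl⟩; constructor <;> linarith [hs.1, hs.2]
      · intro ht; exact ⟨1 - t, ⟨by linarith, by linarith⟩, by ring⟩
    have hvar := eVariationOn.comp_eq_of_antitoneOn f φ hφa
    rw [himg] at hvar
    have hmem : (f ∘ φ) ∈ {g : ℝ → Plane | ContinuousOn g (Set.Icc 0 1) ∧
        Set.MapsTo g (Set.Icc 0 1) P ∧ g 0 = x ∧ g 1 = y} := by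
      refine ⟨?_, ?_, ?_, ?_⟩
      · apply hc.comp ((continuous_const.sub continuous_id).continuousOn)
        intro t ht
        simp only [id_eq, Set.mem_Icc, Pi.sub_apply]
        constructor
        · linarith [ht.2]
        · linarith [ht.1]
      · intro t ht
        refine hm ⟨?_, ?_⟩
        · show (0:ℝ) ≤ 1 - t; linarith [ht.2]
        · show (1:ℝ) - t ≤ 1; linarith [ht.1]
      · show f (1 - 0) = x; rw [sub_zero, h1]
      · show f (1 - 1) = y; rw [sub_self, h0]
    calc geoDist P x y ≤ eVariationOn (f ∘ φ) (Set.Icc 0 1) := iInf₂_le _ hmem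
      _ = eVariationOn f (Set.Icc 0 1) := hvar.symm ▸ rfl
  exact le_antisymm (key p q) (key q p)

lemma segment_subset_union {p x y : Plane} (h : x ∈ segment ℝ p y) :
    segment ℝ p y ⊆ segment ℝ p x ∪ segment ℝ x y := by
  rw [segment_eq_image] at h
  obtain ⟨t₀, ht₀, hx0⟩ := h
  have hx : (1 - t₀) • p + t₀ • y = x := hx0
  intro z hz
  rw [segment_eq_image] at hz
  obtain ⟨s, hs, hzz0⟩ := hz
  have hzz : (1 - s) • p + s • y = z := hzz0
  by_cases hst : s ≤ t₀
  · left
    rw [segment_eq_image]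
    rcases eq_or_lt_of_le ht₀.1 with h0 | h0
    · have hs0 : s = 0 := le_antisymm (hst.trans h0.symm.le) hs.1
      exact ⟨0, by norm_num, by rw [← hzz, hs0]; simp⟩
    · have hne : t₀ ≠ 0 := h0.ne'
      set c := s / t₀ with hcdef
      refine ⟨c, ⟨div_nonneg hs.1 h0.le, div_le_one_of_le₀ hst h0.le⟩, ?_⟩
      have e1 : (1 - c) + c * (1 - t₀) = 1 - s := by
        rw [hcdef]; field_simp; ring
      have e2 : c * t₀ = s := by
        rw [hcdef]; field_simp
      show (1 - c) • p + c • x = z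
      rw [← hx, ← hzz]
      have : (1 - c) • p + c • ((1 - t₀) • p + t₀ • y)
          = ((1 - c) + c * (1 - t₀)) • p + (c * t₀) • y := by
        simp only [smul_add, smul_smul, add_smul]
        abel
      rw [this, e1, e2]
  · right
    rw [segment_eq_image]
    have hlt : t₀ < s := not_le.1 hst
    have h1 : 0 < 1 - t₀ := by linarith [hs.2]
    set c := (s - t₀) / (1 - t₀) with hc
    have hc0 : 0 ≤ c := div_nonneg (by linarith) h1.le
    have hc1 : c ≤ 1 := by
      rw [hc, div_le_one h1]
      linarith [hs.2]
    refine ⟨c, ⟨hc0, hc1⟩, ?_⟩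
    show (1 - c) • x + c • y = z
    have e1 : (1 - c) * (1 - t₀) = 1 - s := by
      rw [hc]; field_simp; ring
    have e2 : (1 - c) * t₀ + c = s := by
      rw [hc]; field_simp; ring
    rw [← hx, ← hzz]
    have : (1 - c) • ((1 - t₀) • p + t₀ • y) + c • y
        = ((1 - c) * (1 - t₀)) • p + ((1 - c) * t₀ + c) • y := by
      simp only [smul_add, smul_smul, add_smul, one_smul]
      abel
    rw [this, e1, e2]

/-- The tail of a path bounds the geodesic distance from an intermediate point. -/
lemma geoDist_le_tail {P : Set Plane} {f : ℝ → Plane} (hc : Continuous f)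
    (hm : ∀ t, f t ∈ P) {t₀ : ℝ} (h0 : 0 ≤ t₀) (h1 : t₀ < 1) :
    geoDist P (f t₀) (f 1) ≤ eVariationOn f (Set.Icc t₀ 1) := by
  set φ : ℝ → ℝ := fun s => (1 - t₀) * s + t₀ with hφ
  have himg : φ '' Set.Icc 0 1 = Set.Icc t₀ 1 := by
    rw [hφ, Set.image_affine_Icc' (by linarith : (0:ℝ) < 1 - t₀)]
    norm_num
  have hmono : MonotoneOn φ (Set.Icc (0:ℝ) 1) := by
    intro a _ b _ hab
    simp only [hφ]
    nlinarith
  have hvar := eVariationOn.comp_eq_of_monotoneOn f φ hmono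
  rw [himg] at hvar
  have hφc : Continuous φ := by continuity
  have hmem : (f ∘ φ) ∈ {g : ℝ → Plane | ContinuousOn g (Set.Icc 0 1) ∧
      Set.MapsTo g (Set.Icc 0 1) P ∧ g 0 = f t₀ ∧ g 1 = f 1} := by
    refine ⟨(hc.comp hφc).continuousOn, fun t _ => hm _, ?_, ?_⟩
    · show f (φ 0) = f t₀; rw [hφ]; norm_num
    · show f (φ 1) = f 1; rw [hφ]; norm_num
  calc geoDist P (f t₀) (f 1) ≤ eVariationOn (f ∘ φ) (Set.Icc 0 1) := iInf₂_le _ hmem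
    _ = eVariationOn f (Set.Icc t₀ 1) := hvar

/-- First exit time of a continuous path from a ball. -/
lemma exists_exit {f : ℝ → Plane} (hc : Continuous f) {ρ : ℝ} (hρ : 0 < ρ)
    (h1 : ρ < dist (f 0) (f 1)) :
    ∃ t₀ : ℝ, 0 < t₀ ∧ t₀ < 1 ∧ dist (f 0) (f t₀) = ρ := by
  set g : ℝ → ℝ := fun t => dist (f 0) (f t) with hg
  have hgc : Continuous g := (Continuous.dist continuous_const hc)
  set T : Set ℝ := Set.Icc 0 1 ∩ g ⁻¹' (Set.Ici ρ) with hT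
  have hTc : IsCompact T := isCompact_Icc.inter_right (isClosed_Ici.preimage hgc)
  have hTne : T.Nonempty := ⟨1, ⟨by norm_num, h1.le⟩⟩
  set t₀ := sInf T with ht₀
  have ht₀T : t₀ ∈ T := hTc.sInf_mem hTne
  have ht₀0 : 0 ≤ t₀ := ht₀T.1.1
  have ht₀1 : t₀ ≤ 1 := ht₀T.1.2
  have h0T : (0:ℝ) ∉ T := by
    intro h
    have : ρ ≤ g 0 := h.2
    rw [hg] at this
    simp only [dist_self] at this
    linarith
  have ht₀pos : 0 < t₀ := lt_of_le_of_ne ht₀0 (fun h => h0T (h ▸ ht₀T))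
  have hlow : ∀ s, 0 ≤ s → s < t₀ → g s < ρ := by
    intro s hs0 hst
    by_contra hge
    have : s ∈ T := ⟨⟨hs0, hst.le.trans ht₀1⟩, not_lt.1 hge⟩
    exact absurd (csInf_le hTc.bddBelow this) (not_le.2 hst)
  have heq : g t₀ = ρ := by
    refine le_antisymm ?_ ht₀T.2
    by_contra hgt
    push_neg at hgt
    have hcont : ContinuousAt g t₀ := hgc.continuousAt
    obtain ⟨δ, hδ, hball⟩ := Metric.continuousAt_iff.1 hcont (g t₀ - ρ) (by linarith)
    set s := max 0 (t₀ - δ/2) with hs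
    have hs0 : 0 ≤ s := le_max_left _ _
    have hst : s < t₀ := by
      apply max_lt ht₀pos
      linarith
    have hsd : dist s t₀ < δ := by
      rw [Real.dist_eq, abs_sub_lt_iff]
      constructor
      · linarith
      · have : t₀ - δ/2 ≤ s := le_max_right _ _
        linarith
    have := hball hsd
    rw [Real.dist_eq, abs_sub_lt_iff] at this
    have hgs : g s < ρ := hlow s hs0 hst
    linarith [this.2]
  have ht₀ne1 : t₀ ≠ 1 := by
    intro h
    rw [h] at heq
    rw [hg] at heq
    simp only at heq
    linarith
  exact ⟨t₀, ht₀pos, lt_of_le_of_ne ht₀1 ht₀ne1, heq⟩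

lemma isClosed_visible {P : Set Plane} (hPc : IsClosed P) (p : Plane) :
    IsClosed {x : Plane | segment ℝ p x ⊆ P} := by
  have : {x : Plane | segment ℝ p x ⊆ P} =
      ⋂ t ∈ Set.Icc (0:ℝ) 1, {x : Plane | (1 - t) • p + t • x ∈ P} := by
    ext x
    simp only [Set.mem_setOf_eq, Set.mem_iInter]
    constructor
    · intro h t ht
      exact h (by rw [segment_eq_image]; exact ⟨t, ht, rfl⟩)
    · intro h z hz
      rw [segment_eq_image] at hz
      obtain ⟨t, ht, rfl⟩ := hz
      exact h t ht
  rw [this]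
  refine isClosed_biInter fun t _ => ?_
  exact hPc.preimage (continuous_const.add (continuous_const_smul t))

lemma continuous_geoDistR {P : Set Plane} (hPc : IsClosed P) (hH : HomeoToDisk P)
    (E : Finset (Plane × Plane))
    (hfr : frontier P = ⋃ e ∈ E, segment ℝ e.1 e.2)
    {w : Plane} (hw : w ∈ P) :
    Continuous (fun y : ↥P => (geoDist P ↑y w).toReal) := by
  rw [Metric.continuous_iff]
  intro y ε hε
  obtain ⟨ρ, hρ, hstar⟩ := local_star hPc E hfr ↑y y.2
  refine ⟨min ρ ε, by positivity, fun z hz => ?_⟩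
  rw [Subtype.dist_eq] at hz
  have hdzy : dist (↑z : Plane) ↑y ≤ ρ := le_of_lt (lt_of_lt_of_le hz (min_le_left _ _))
  have hseg : segment ℝ (↑y) (↑z) ⊆ P := hstar ↑z z.2 (by rw [dist_comm]; exact hdzy)
  have hseg' : segment ℝ (↑z) (↑y) ⊆ P := by rw [segment_symm]; exact hseg
  have hfin : ∀ a : ↥P, geoDist P ↑a w ≠ ⊤ := fun a => geoDist_ne_top hPc hH E hfr a.2 hw
  have key : ∀ a b : ↥P, segment ℝ (↑a) (↑b) ⊆ P →
      (geoDist P ↑a w).toReal ≤ dist (↑a : Plane) ↑b + (geoDist P ↑b w).toReal := by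
    intro a b hab
    have e1 : geoDist P ↑a w ≤ edist (↑a : Plane) ↑b + geoDist P ↑b w :=
      (geoDist_triangle P ↑a ↑b w).trans
        (add_le_add_left (geoDist_le_edist_of_segment P _ _ hab) _)
    have hne : edist (↑a : Plane) ↑b + geoDist P ↑b w ≠ ⊤ :=
      ENNReal.add_ne_top.2 ⟨(edist_lt_top _ _).ne, hfin b⟩
    have := ENNReal.toReal_mono hne e1
    rwa [ENNReal.toReal_add (edist_lt_top _ _).ne (hfin b), edist_dist,
      ENNReal.toReal_ofReal dist_nonneg] at this
  have h1 := key z y hseg'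
  have h2 := key y z hseg
  rw [Real.dist_eq, abs_sub_lt_iff]
  have hd : dist (↑z : Plane) ↑y < min ρ ε := hz
  have hd' : dist (↑y : Plane) ↑z < min ρ ε := by rwa [dist_comm]
  constructor
  · have : dist (↑z : Plane) ↑y < ε := lt_of_lt_of_le hd (min_le_right _ _)
    linarith
  · have : dist (↑y : Plane) ↑z < ε := lt_of_lt_of_le hd' (min_le_right _ _)
    linarith

/-- Descent step: from any point of `P` one can reach, on the sphere of radius `ρ`
around it (inside the locally convex piece), a point geodesically closer to `u` by `ρ`. -/
lemma exists_descent {P : Set Plane} (hPco : IsCompact P)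
    {x u : Plane} (hxP : x ∈ P)
    (hfin : geoDist P x u ≠ ⊤) {ρ : ℝ} (hρpos : 0 < ρ) (hρu : ρ < dist x u)
    (hconv : Convex ℝ (P ∩ Metric.closedBall x ρ)) :
    ∃ y : Plane, y ∈ P ∧ dist x y = ρ ∧
      geoDist P y u + ENNReal.ofReal ρ ≤ geoDist P x u := by
  have hseq : ∀ n : ℕ, ∃ y : Plane, y ∈ P ∧ dist x y = ρ ∧
      geoDist P y u + ENNReal.ofReal ρ ≤
        geoDist P x u + ENNReal.ofReal (1/(n+1)) := by
    intro n
    have hc : geoDist P x u < geoDist P x u + ENNReal.ofReal (1/(n+1)) :=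
      ENNReal.lt_add_right hfin (ENNReal.ofReal_pos.2 (by positivity)).ne'
    obtain ⟨f, hfc, hfm, hf0, hf1, hfv⟩ := exists_path_of_geoDist_lt hc
    obtain ⟨t₀, ht₀pos, ht₀lt, ht₀d⟩ := exists_exit hfc hρpos
      (by rw [hf0, hf1]; exact hρu)
    have hsplit := eVariationOn.Icc_add_Icc f (s := Set.univ)
      ht₀pos.le ht₀lt.le (Set.mem_univ t₀)
    simp only [Set.univ_inter] at hsplit
    have e1 : ENNReal.ofReal ρ ≤ eVariationOn f (Set.Icc 0 t₀) := by
      have := eVariationOn.edist_le f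
        (Set.mem_Icc.2 ⟨le_refl (0:ℝ), ht₀pos.le⟩)
        (Set.mem_Icc.2 ⟨ht₀pos.le, le_refl t₀⟩)
      rwa [edist_dist, ht₀d] at this
    have e2 : geoDist P (f t₀) u ≤ eVariationOn f (Set.Icc t₀ 1) := by
      have := geoDist_le_tail hfc hfm ht₀pos.le ht₀lt
      rwa [hf1] at this
    refine ⟨f t₀, hfm t₀, by rw [← hf0]; exact ht₀d, ?_⟩
    calc geoDist P (f t₀) u + ENNReal.ofReal ρ
        ≤ eVariationOn f (Set.Icc t₀ 1) + eVariationOn f (Set.Icc 0 t₀) :=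
          add_le_add e2 e1
      _ = eVariationOn f (Set.Icc 0 1) := by rw [add_comm]; exact hsplit
      _ ≤ geoDist P x u + ENNReal.ofReal (1/(n+1)) := hfv.le
  choose ys hysP hysd hysk using hseq
  have hK : IsCompact (P ∩ Metric.closedBall x ρ) :=
    hPco.inter_right Metric.isClosed_closedBall
  have hmem : ∀ n, ys n ∈ P ∩ Metric.closedBall x ρ := by
    intro n
    exact ⟨hysP n, by rw [Metric.mem_closedBall, dist_comm, hysd n]⟩
  obtain ⟨y, hyK, φ, hφ, hyt⟩ := hK.tendsto_subseq hmem
  have hyd : dist x y = ρ := by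
    have h1 : Filter.Tendsto (fun n => dist x (ys (φ n))) Filter.atTop
        (nhds (dist x y)) := ((continuous_const.dist continuous_id).tendsto y).comp hyt
    have h2 : (fun n => dist x (ys (φ n))) = fun _ => ρ := by
      ext n; exact hysd (φ n)
    rw [h2] at h1
    exact (tendsto_nhds_unique tendsto_const_nhds h1).symm
  refine ⟨y, hyK.1, hyd, ?_⟩
  have hbound : ∀ n, geoDist P y u + ENNReal.ofReal ρ ≤
      geoDist P x u + ENNReal.ofReal (dist y (ys (φ n)) + 1/(φ n + 1)) := by
    intro n
    have hseg : segment ℝ y (ys (φ n)) ⊆ P := fun z hz =>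
      (hconv.segment_subset hyK (hmem (φ n)) hz).1
    have t1 : geoDist P y u ≤ edist y (ys (φ n)) + geoDist P (ys (φ n)) u :=
      (geoDist_triangle P y (ys (φ n)) u).trans
        (add_le_add_left (geoDist_le_edist_of_segment P _ _ hseg) _)
    calc geoDist P y u + ENNReal.ofReal ρ
        ≤ edist y (ys (φ n)) + (geoDist P (ys (φ n)) u + ENNReal.ofReal ρ) := by
          rw [← add_assoc]; exact add_le_add_left t1 _
      _ ≤ edist y (ys (φ n)) + (geoDist P x u + ENNReal.ofReal (1/(φ n + 1))) :=
          add_le_add_right (hysk (φ n)) _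
      _ = geoDist P x u + ENNReal.ofReal (dist y (ys (φ n)) + 1/(φ n + 1)) := by
          rw [edist_dist, ENNReal.ofReal_add dist_nonneg (by positivity)]
          ring
  have htend : Filter.Tendsto
      (fun n => geoDist P x u + ENNReal.ofReal (dist y (ys (φ n)) + 1/(φ n + 1)))
      Filter.atTop (nhds (geoDist P x u)) := by
    have hr : Filter.Tendsto (fun n => dist y (ys (φ n)) + 1/(φ n + 1))
        Filter.atTop (nhds 0) := by
      have d1 : Filter.Tendsto (fun n => dist y (ys (φ n))) Filter.atTop (nhds 0) := by
        have : Filter.Tendsto (fun n => dist y ((ys ∘ φ) n)) Filter.atTop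
            (nhds (dist y y)) :=
          ((continuous_const.dist continuous_id :
            Continuous fun z : Plane => dist y z).tendsto y).comp hyt
        simpa using this
      have d2 : Filter.Tendsto (fun n : ℕ => 1/((φ n : ℝ) + 1)) Filter.atTop (nhds 0) :=
        tendsto_one_div_add_atTop_nhds_zero_nat.comp hφ.tendsto_atTop
      simpa using d1.add d2
    have := ENNReal.tendsto_ofReal (a := 0) hr
    rw [ENNReal.ofReal_zero] at this
    have := Filter.Tendsto.const_add (geoDist P x u) this
    simpa using this
  exact ge_of_tendsto' htend hbound

end AuxGeodesicProofs

/-- In a simple polygon, every point sees its geodesically nearest reflex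
vertex along a straight segment, so the geodesic distance to it equals the Euclidean
distance. -/
theorem nearest_reflex_vertex_is_visible
    (P : Set Plane) (hP : IsSimplePolygon P)
    (hR : {v | IsReflexVertex P v}.Nonempty)
    (p : Plane) (hp : p ∈ P)
    (u : Plane) (hu : IsReflexVertex P u)
    (hmin : ∀ v : Plane, IsReflexVertex P v → geoDist P p u ≤ geoDist P p v) :
    segment ℝ p u ⊆ P ∧ geoDist P p u = ENNReal.ofReal (dist p u) := by
  obtain ⟨hPco, hH, E, hEne, hfr⟩ := hP
  have hPc : IsClosed P := hPco.isClosed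
  have hfrP : frontier P ⊆ P := by
    have := frontier_subset_closure (s := P)
    rwa [hPc.closure_eq] at this
  have huP : u ∈ P := hfrP hu.1
  have hfinPu : ∀ y ∈ P, geoDist P y u ≠ ⊤ :=
    fun y hy => geoDist_ne_top hPc hH E hfr hy huP
  have hfinpP : ∀ y ∈ P, geoDist P p y ≠ ⊤ :=
    fun y hy => geoDist_ne_top hPc hH E hfr hp hy
  have hLfin : geoDist P p u ≠ ⊤ := hfinpP u huP
  haveI : CompactSpace ↥P := isCompact_iff_compactSpace.1 hPco
  set hRf : ↥P → ℝ := fun y => (geoDist P ↑y u).toReal with hRfdef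
  have hRcont : Continuous hRf := continuous_geoDistR hPc hH E hfr huP
  set gRf : ↥P → ℝ := fun y => (geoDist P p ↑y).toReal with gRfdef
  have gcont : Continuous gRf := by
    have : gRf = fun y : ↥P => (geoDist P ↑y p).toReal := by
      funext y; rw [gRfdef]; rw [geoDist_comm]
    rw [this]
    exact continuous_geoDistR hPc hH E hfr hp
  set A : Set ↥P := {y | segment ℝ p ↑y ⊆ P ∧ geoDist P p ↑y = edist p ↑y ∧
      edist p ↑y + geoDist P ↑y u ≤ geoDist P p u} with hA
  -- translation to real-valued conditions
  have t1 : ∀ y : ↥P, (geoDist P p ↑y = edist p ↑y ↔ gRf y = dist p ↑y) := by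
    intro y
    constructor
    · intro h
      rw [gRfdef]
      simp only
      rw [h, edist_dist, ENNReal.toReal_ofReal dist_nonneg]
    · intro h
      have hfin := hfinpP ↑y y.2
      calc geoDist P p ↑y = ENNReal.ofReal ((geoDist P p ↑y).toReal) :=
            (ENNReal.ofReal_toReal hfin).symm
        _ = ENNReal.ofReal (dist p ↑y) := by rw [← h]
        _ = edist p ↑y := (edist_dist _ _).symm
  have t2 : ∀ y : ↥P, (edist p ↑y + geoDist P ↑y u ≤ geoDist P p u ↔
      dist p ↑y + hRf y ≤ (geoDist P p u).toReal) := by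
    intro y
    have hsumfin : edist p ↑y + geoDist P ↑y u ≠ ⊤ :=
      ENNReal.add_ne_top.2 ⟨(edist_lt_top _ _).ne, hfinPu ↑y y.2⟩
    rw [← ENNReal.toReal_le_toReal hsumfin hLfin,
      ENNReal.toReal_add (edist_lt_top _ _).ne (hfinPu ↑y y.2)]
    have he : (edist p ↑y).toReal = dist p ↑y := by
      rw [edist_dist, ENNReal.toReal_ofReal dist_nonneg]
    rw [he]
  have hAclosed : IsClosed A := by
    have : A = (Subtype.val ⁻¹' {x : Plane | segment ℝ p x ⊆ P}) ∩
        ({y : ↥P | gRf y = dist p ↑y} ∩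
         {y : ↥P | dist p ↑y + hRf y ≤ (geoDist P p u).toReal}) := by
      ext y
      simp only [hA, Set.mem_setOf_eq, Set.mem_inter_iff, Set.mem_preimage]
      rw [t1 y, t2 y]
    rw [this]
    refine IsClosed.inter ((isClosed_visible hPc p).preimage continuous_subtype_val)
      (IsClosed.inter ?_ ?_)
    · exact isClosed_eq gcont (continuous_const.dist continuous_subtype_val)
    · exact isClosed_le ((continuous_const.dist continuous_subtype_val).add hRcont)
        continuous_const
  have hpA : (⟨p, hp⟩ : ↥P) ∈ A := by
    refine ⟨?_, ?_, ?_⟩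
    · show segment ℝ p p ⊆ P
      rw [segment_same]
      simpa using hp
    · show geoDist P p p = edist p p
      rw [geoDist_self hp, edist_self]
    · show edist p p + geoDist P p u ≤ geoDist P p u
      rw [edist_self, zero_add]
  obtain ⟨xm, hxmA, hxmin⟩ := hAclosed.isCompact.exists_isMinOn ⟨_, hpA⟩
    hRcont.continuousOn
  obtain ⟨hvis, htightE, hbudE⟩ := hxmA
  have hxP : (↑xm : Plane) ∈ P := xm.2
  have hgfin : geoDist P ↑xm u ≠ ⊤ := hfinPu ↑xm hxP
  by_cases hzero : geoDist P (↑xm : Plane) u = 0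
  · have hxu : (↑xm : Plane) = u := by
      have h1 := edist_le_geoDist P ↑xm u
      rw [hzero, le_zero_iff] at h1
      exact edist_eq_zero.1 h1
    constructor
    · rw [← hxu]; exact hvis
    · rw [← hxu, htightE, edist_dist]
  · exfalso
    have hxune : (↑xm : Plane) ≠ u := fun h => hzero (by rw [h]; exact geoDist_self huP)
    have hdxu : 0 < dist (↑xm : Plane) u := dist_pos.2 hxune
    by_cases hrefl : IsReflexVertex P ↑xm
    · have h1 : geoDist P p u ≤ geoDist P p ↑xm := hmin ↑xm hrefl
      rw [htightE] at h1
      have h2 : edist p ↑xm + geoDist P ↑xm u ≤ edist p ↑xm + 0 := by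
        rw [add_zero]; exact hbudE.trans h1
      have := (ENNReal.add_le_add_iff_left (edist_lt_top p ↑xm).ne).1 h2
      exact hzero (le_zero_iff.1 this)
    by_cases hxp : (↑xm : Plane) = p
    · -- the minimizer is p itself
      obtain ⟨ρ, hρpos, hρle, hconv⟩ := convex_nbhd hPc hxP hrefl (half_pos hdxu)
      have hρu : ρ < dist (↑xm : Plane) u := lt_of_le_of_lt hρle (half_lt_self hdxu)
      obtain ⟨y, hyP, hyd, hkey⟩ := exists_descent hPco hxP hgfin hρpos hρu hconv
      have hyK : y ∈ P ∩ Metric.closedBall ↑xm ρ :=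
        ⟨hyP, by rw [Metric.mem_closedBall, dist_comm]; exact hyd.le⟩
      have hxK : (↑xm : Plane) ∈ P ∩ Metric.closedBall ↑xm ρ :=
        ⟨hxP, by rw [Metric.mem_closedBall, dist_self]; exact hρpos.le⟩
      have hsegpy : segment ℝ p y ⊆ P := by
        intro z hz
        rw [← hxp] at hz
        exact (hconv.segment_subset hxK hyK hz).1
      have hyA : (⟨y, hyP⟩ : ↥P) ∈ A := by
        refine ⟨hsegpy, le_antisymm (geoDist_le_edist_of_segment P p y hsegpy)
          (edist_le_geoDist P p y), ?_⟩
        show edist p y + geoDist P y u ≤ geoDist P p u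
        have hdpy : dist p y = ρ := by rw [← hxp]; exact hyd
        rw [edist_dist, hdpy, ← hxp, add_comm]
        exact hkey
      have hlt : hRf ⟨y, hyP⟩ < hRf xm := by
        rw [hRfdef]
        apply (ENNReal.toReal_lt_toReal (hfinPu y hyP) hgfin).2
        calc geoDist P y u < geoDist P y u + ENNReal.ofReal ρ :=
              ENNReal.lt_add_right (ne_top_of_le_ne_top hgfin
                (le_trans le_self_add hkey)) (ENNReal.ofReal_pos.2 hρpos).ne'
          _ ≤ geoDist P ↑xm u := hkey
      exact absurd (isMinOn_iff.1 hxmin ⟨y, hyP⟩ hyA) (not_le.2 hlt)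
    · -- the minimizer is an interior visible point; use the collinearity argument
      have hD : 0 < dist p ↑xm := dist_pos.2 (fun h => hxp h.symm)
      set D := dist p (↑xm : Plane) with hDdef
      have hεpos : 0 < min (dist (↑xm : Plane) u) D / 2 := by positivity
      obtain ⟨ρ, hρpos, hρle, hconv⟩ := convex_nbhd hPc hxP hrefl hεpos
      have hρu : ρ < dist (↑xm : Plane) u := by
        have h1 : min (dist (↑xm : Plane) u) D ≤ dist (↑xm : Plane) u := min_le_left _ _
        linarith
      have hρD : ρ < D := by
        have h1 : min (dist (↑xm : Plane) u) D ≤ D := min_le_right _ _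
        linarith
      obtain ⟨y, hyP, hyd, hkey⟩ := exists_descent hPco hxP hgfin hρpos hρu hconv
      have hyK : y ∈ P ∩ Metric.closedBall ↑xm ρ :=
        ⟨hyP, by rw [Metric.mem_closedBall, dist_comm]; exact hyd.le⟩
      have hxK : (↑xm : Plane) ∈ P ∩ Metric.closedBall ↑xm ρ :=
        ⟨hxP, by rw [Metric.mem_closedBall, dist_self]; exact hρpos.le⟩
      set a : Plane := ↑xm + (ρ/D) • (p - ↑xm) with hadef
      have hρD0 : (0:ℝ) ≤ ρ/D := div_nonneg hρpos.le hD.le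
      have hρD1 : ρ/D ≤ 1 := (div_le_one hD).2 hρD.le
      have ha1 : a ∈ segment ℝ p ↑xm := by
        rw [segment_eq_image]
        refine ⟨1 - ρ/D, ⟨by linarith, by linarith⟩, ?_⟩
        show (1 - (1 - ρ/D)) • p + (1 - ρ/D) • (↑xm : Plane) = a
        rw [hadef]; module
      have hnpx : ‖p - (↑xm : Plane)‖ = D := by rw [← dist_eq_norm]
      have hdxa : dist (↑xm : Plane) a = ρ := by
        rw [dist_eq_norm]
        have hv : (↑xm : Plane) - a = (-(ρ/D)) • (p - ↑xm) := by rw [hadef]; module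
        rw [hv, norm_smul, Real.norm_eq_abs, abs_neg, abs_of_nonneg hρD0, hnpx,
          div_mul_cancel₀ _ hD.ne']
      have hdpa : dist p a = D - ρ := by
        rw [dist_eq_norm]
        have hv : p - a = (1 - ρ/D) • (p - ↑xm) := by rw [hadef]; module
        rw [hv, norm_smul, Real.norm_eq_abs, abs_of_nonneg (by linarith), hnpx]
        field_simp
      have haP : a ∈ P := hvis ha1
      have haK : a ∈ P ∩ Metric.closedBall ↑xm ρ :=
        ⟨haP, by rw [Metric.mem_closedBall, dist_comm]; exact hdxa.le⟩
      have hsegay : segment ℝ a y ⊆ P := fun z hz => (hconv.segment_subset haK hyK hz).1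
      have hsegpa : segment ℝ p a ⊆ P := fun z hz =>
        hvis ((convex_segment p (↑xm : Plane)).segment_subset
          (left_mem_segment ℝ p ↑xm) ha1 hz)
      have hgyfin : geoDist P y u ≠ ⊤ :=
        ne_top_of_le_ne_top hgfin (le_trans le_self_add hkey)
      -- the chain of inequalities
      have c1 : geoDist P p u ≤
          ENNReal.ofReal (D - ρ) + ENNReal.ofReal (dist a y) + geoDist P y u := by
        calc geoDist P p u ≤ geoDist P p y + geoDist P y u := geoDist_triangle P p y u
          _ ≤ (geoDist P p a + geoDist P a y) + geoDist P y u :=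
              add_le_add_left (geoDist_triangle P p a y) _
          _ ≤ (ENNReal.ofReal (D - ρ) + ENNReal.ofReal (dist a y)) + geoDist P y u := by
              refine add_le_add_left (add_le_add ?_ ?_) _
              · have := geoDist_le_edist_of_segment P p a hsegpa
                rwa [edist_dist, hdpa] at this
              · have := geoDist_le_edist_of_segment P a y hsegay
                rwa [edist_dist] at this
      have c2 : ENNReal.ofReal D + geoDist P ↑xm u ≤ geoDist P p u := by
        have := hbudE
        rwa [edist_dist] at this
      have combined : (ENNReal.ofReal D + ENNReal.ofReal ρ) + geoDist P y u ≤
          (ENNReal.ofReal (D - ρ) + ENNReal.ofReal (dist a y)) + geoDist P y u := by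
        calc (ENNReal.ofReal D + ENNReal.ofReal ρ) + geoDist P y u
            = ENNReal.ofReal D + (geoDist P y u + ENNReal.ofReal ρ) := by ring
          _ ≤ ENNReal.ofReal D + geoDist P ↑xm u := add_le_add_right hkey _
          _ ≤ geoDist P p u := c2
          _ ≤ ENNReal.ofReal (D - ρ) + ENNReal.ofReal (dist a y) + geoDist P y u := c1
      have hreal : D + ρ ≤ (D - ρ) + dist a y := by
        have h1 := (ENNReal.add_le_add_iff_right hgyfin).1 combined
        rw [← ENNReal.ofReal_add hD.le hρpos.le,
          ← ENNReal.ofReal_add (by linarith : (0:ℝ) ≤ D - ρ) dist_nonneg] at h1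
        exact (ENNReal.ofReal_le_ofReal_iff (by
          have := dist_nonneg (x := a) (y := y); linarith)).1 h1
      have hday_ge : 2*ρ ≤ dist a y := by linarith
      have hday_le : dist a y ≤ 2*ρ := by
        have := dist_triangle a (↑xm : Plane) y
        rw [dist_comm a ↑xm] at this
        rw [hdxa, hyd] at this
        linarith
      have heq : dist a (↑xm : Plane) + dist (↑xm : Plane) y = dist a y := by
        rw [dist_comm a ↑xm, hdxa, hyd]
        linarith
      have hw : Wbtw ℝ a (↑xm : Plane) y := dist_add_dist_eq_iff.1 heq
      have hxmemay : (↑xm : Plane) ∈ segment ℝ a y := hw.mem_segment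
      rw [segment_eq_image] at hxmemay
      obtain ⟨t, ht, hxt0⟩ := hxmemay
      have hxt : (1 - t) • a + t • y = (↑xm : Plane) := hxt0
      have v1 : (↑xm : Plane) - a = t • (y - a) := by rw [← hxt]; module
      have v2 : y - (↑xm : Plane) = (1 - t) • (y - a) := by rw [← hxt]; module
      set n := ‖y - a‖ with hndef
      have e1 : t * n = ρ := by
        have : ‖(↑xm : Plane) - a‖ = ρ := by rw [← dist_eq_norm]; exact hdxa
        rw [v1, norm_smul, Real.norm_eq_abs, abs_of_nonneg ht.1] at this
        exact this
      have e2 : (1 - t) * n = ρ := by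
        have : ‖y - (↑xm : Plane)‖ = ρ := by
          rw [← dist_eq_norm, dist_comm]; exact hyd
        rw [v2, norm_smul, Real.norm_eq_abs, abs_of_nonneg (by linarith [ht.2])] at this
        exact this
      have hn : n ≠ 0 := by
        intro h
        rw [h, mul_zero] at e1
        exact hρpos.ne' e1.symm
      have ht12 : t = 1 - t := mul_right_cancel₀ hn (e1.trans e2.symm)
      have hyx : y - (↑xm : Plane) = (↑xm : Plane) - a := by
        rw [v1, v2, ← ht12]
      have hyval : y = ↑xm + (ρ/D) • ((↑xm : Plane) - p) := by
        have hv : (↑xm : Plane) - a = (ρ/D) • ((↑xm : Plane) - p) := by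
          rw [hadef]; module
        have : y = ↑xm + ((↑xm : Plane) - a) := by
          rw [← hyx]; abel
        rw [this, hv]
      have hdpy : dist p y = D + ρ := by
        rw [dist_eq_norm]
        have hv : p - y = (-(1 + ρ/D)) • ((↑xm : Plane) - p) := by rw [hyval]; module
        have hnxp : ‖(↑xm : Plane) - p‖ = D := by
          rw [← dist_eq_norm, dist_comm]
        rw [hv, norm_smul, Real.norm_eq_abs, abs_neg, abs_of_nonneg (by linarith), hnxp]
        field_simp
      have hxmempy : (↑xm : Plane) ∈ segment ℝ p y := by
        rw [segment_eq_image]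
        have hDρ : (0:ℝ) < D + ρ := by linarith
        refine ⟨D/(D+ρ), ⟨by positivity, by rw [div_le_one hDρ]; linarith⟩, ?_⟩
        show (1 - D/(D+ρ)) • p + (D/(D+ρ)) • y = (↑xm : Plane)
        rw [hyval]
        have expand : (1 - D/(D+ρ)) • p + (D/(D+ρ)) • ((↑xm : Plane) + (ρ/D) • ((↑xm : Plane) - p)) =
            (D/(D+ρ) + (D/(D+ρ)) * (ρ/D)) • (↑xm : Plane) +
            ((1 - D/(D+ρ)) - (D/(D+ρ)) * (ρ/D)) • p := by
          module
        rw [expand]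
        have e3 : (D/(D+ρ)) * (ρ/D) = 1 - D/(D+ρ) := by
          field_simp
          ring
        rw [e3]
        have e4 : D/(D+ρ) + (1 - D/(D+ρ)) = 1 := by ring
        rw [e4, one_smul, sub_self, zero_smul, add_zero]
      have hsegpy : segment ℝ p y ⊆ P := by
        intro z hz
        rcases segment_subset_union hxmempy hz with h | h
        · exact hvis h
        · exact (hconv.segment_subset hxK hyK h).1
      have hyA : (⟨y, hyP⟩ : ↥P) ∈ A := by
        refine ⟨hsegpy, le_antisymm (geoDist_le_edist_of_segment P p y hsegpy)
          (edist_le_geoDist P p y), ?_⟩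
        show edist p y + geoDist P y u ≤ geoDist P p u
        rw [edist_dist, hdpy, ENNReal.ofReal_add hD.le hρpos.le]
        calc ENNReal.ofReal D + ENNReal.ofReal ρ + geoDist P y u
            = ENNReal.ofReal D + (geoDist P y u + ENNReal.ofReal ρ) := by ring
          _ ≤ ENNReal.ofReal D + geoDist P ↑xm u := add_le_add_right hkey _
          _ ≤ geoDist P p u := c2
      have hlt : hRf ⟨y, hyP⟩ < hRf xm := by
        rw [hRfdef]
        apply (ENNReal.toReal_lt_toReal (hfinPu y hyP) hgfin).2
        calc geoDist P y u < geoDist P y u + ENNReal.ofReal ρ :=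
              ENNReal.lt_add_right hgyfin (ENNReal.ofReal_pos.2 hρpos).ne'
          _ ≤ geoDist P ↑xm u := hkey
      exact absurd (isMinOn_iff.1 hxmin ⟨y, hyP⟩ hyA) (not_le.2 hlt)
end
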